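/- arXiv:2211.14390 — 5 statements merged into one kernel-verified Lean document; each statement's English description precedes it below -/
import Mathlib

section
/- (Theorem 1, weak form.) Let N be an odd natural number and let a₀,…,a_N : ℝ → ℝ be smooth functions all of whose derivatives have at most polynomial growth. Define G(t) = Σ_{n=0}^{(N−1)/2} a_{2n}^{(2n)}(t) and F(t) = Σ_{n=0}^{(N−1)/2} a_{2n+1}^{(2n)}(t), where a^{(k)} denotes the k-th derivative. Suppose T is a tempered distribution on ℝ² (a continuous linear functional on the Schwartz space) satisfying, for every Schwartz function φ : ℝ² → ℝ, T(−∂ₜ²φ + ∂ₓ²φ) = Σ_{n=0}^{N} ∫_ℝ a_n(t)(−1)ⁿ(∂ₓⁿφ)(t,0) dt. Define T̄ = T − D, where D is the tempered distribution D(φ) = Σ_{i=0}^{(N−1)/2−1} [ ∫_ℝ (Σ_{n=0}^{(N−1)/2−1−i} a_{2n+2i+2}^{(2n)}(t)) (∂ₓ^{2i}φ)(t,0) dt − ∫_ℝ (Σ_{n=0}^{(N−1)/2−1−i} a_{2n+2i+3}^{(2n)}(t)) (∂ₓ^{2i+1}φ)(t,0) dt ]. Then for every Schwartz function φ, T̄(−∂ₜ²φ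 + ∂ₓ²φ) = ∫_ℝ G(t)φ(t,0) dt − ∫_ℝ F(t)(∂ₓφ)(t,0) dt. -/
open MeasureTheory SchwartzMap Real

/-- Spatial partial derivative `∂ₓ` on Schwartz functions on `ℝ²` (coordinates `(t, x)`). -/
noncomputable def Dx (φ : SchwartzMap (ℝ × ℝ) ℝ) : SchwartzMap (ℝ × ℝ) ℝ :=
  LineDeriv.lineDerivOpCLM ℝ (SchwartzMap (ℝ × ℝ) ℝ) ((0, 1) : ℝ × ℝ) φ

/-- Temporal partial derivative `∂ₜ` on Schwartz functions on `ℝ²`. -/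
noncomputable def Dt (φ : SchwartzMap (ℝ × ℝ) ℝ) : SchwartzMap (ℝ × ℝ) ℝ :=
  LineDeriv.lineDerivOpCLM ℝ (SchwartzMap (ℝ × ℝ) ℝ) ((1, 0) : ℝ × ℝ) φ

/-- The wave operator `□φ = −∂ₜ²φ + ∂ₓ²φ`. -/
noncomputable def waveOp (φ : SchwartzMap (ℝ × ℝ) ℝ) : SchwartzMap (ℝ × ℝ) ℝ :=
  -(Dt (Dt φ)) + Dx (Dx φ)

/-! ### Auxiliary lemmas on temperate growth -/

lemma tg_deriv {f : ℝ → ℝ} (hf : f.HasTemperateGrowth) :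
    Function.HasTemperateGrowth (deriv f) := by
  constructor
  · exact (contDiff_infty_iff_deriv.1 hf.1).2
  · intro n
    obtain ⟨k, C, h⟩ := hf.2 (n + 1)
    refine ⟨k, C, fun x => ?_⟩
    rw [norm_iteratedFDeriv_eq_norm_iteratedDeriv, ← iteratedDeriv_succ',
      ← norm_iteratedFDeriv_eq_norm_iteratedDeriv]
    exact h x

lemma tg_iteratedDeriv {f : ℝ → ℝ} (hf : f.HasTemperateGrowth) (k : ℕ) :
    Function.HasTemperateGrowth (iteratedDeriv k f) := by
  induction k with
  | zero => simpa using hf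
  | succ k ih => rw [iteratedDeriv_succ]; exact tg_deriv ih

lemma tg_add {f g : ℝ → ℝ} (hf : f.HasTemperateGrowth) (hg : g.HasTemperateGrowth) :
    Function.HasTemperateGrowth (fun t => f t + g t) := by
  constructor
  · exact hf.1.add hg.1
  · intro n
    obtain ⟨k1, C1, h1⟩ := hf.2 n
    obtain ⟨k2, C2, h2⟩ := hg.2 n
    refine ⟨max k1 k2, max C1 0 + max C2 0, fun x => ?_⟩
    have hx : (1:ℝ) ≤ 1 + ‖x‖ := by simp [norm_nonneg]
    have e : iteratedFDeriv ℝ n (fun t => f t + g t) x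
        = iteratedFDeriv ℝ n f x + iteratedFDeriv ℝ n g x :=
      fun_iteratedFDeriv_add_apply (hf.1.contDiffAt.of_le (by exact_mod_cast le_top)) (hg.1.contDiffAt.of_le (by exact_mod_cast le_top))
    calc ‖iteratedFDeriv ℝ n (fun t => f t + g t) x‖
        ≤ ‖iteratedFDeriv ℝ n f x‖ + ‖iteratedFDeriv ℝ n g x‖ := by rw [e]; exact norm_add_le _ _
      _ ≤ C1 * (1 + ‖x‖) ^ k1 + C2 * (1 + ‖x‖) ^ k2 := add_le_add (h1 x) (h2 x)
      _ ≤ max C1 0 * (1 + ‖x‖) ^ max k1 k2 + max C2 0 * (1 + ‖x‖) ^ max k1 k2 := by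
          gcongr <;> first | exact hx | exact le_max_left _ _ | exact le_max_right _ _
      _ = (max C1 0 + max C2 0) * (1 + ‖x‖) ^ max k1 k2 := by ring

lemma tg_sum {s : Finset ℕ} {f : ℕ → ℝ → ℝ} (hf : ∀ i ∈ s, (f i).HasTemperateGrowth) :
    Function.HasTemperateGrowth (fun t => ∑ i ∈ s, f i t) := by
  induction s using Finset.cons_induction with
  | empty => simpa using Function.HasTemperateGrowth.zero
  | cons i s hi ih =>
    simp only [Finset.sum_cons]
    exact tg_add (hf i (Finset.mem_cons_self i s))
      (ih fun j hj => hf j (Finset.mem_cons_of_mem hj))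

/-! ### Restriction to the line `x = 0` -/

lemma tg_line : Function.HasTemperateGrowth (fun t : ℝ => ((t, 0) : ℝ × ℝ)) := by
  have := (ContinuousLinearMap.inl ℝ ℝ ℝ).hasTemperateGrowth
  exact this

/-- Restriction of a Schwartz function on `ℝ²` to the line `x = 0`. -/
noncomputable def lineR : SchwartzMap (ℝ × ℝ) ℝ →L[ℝ] SchwartzMap ℝ ℝ :=
  SchwartzMap.compCLM ℝ tg_line
    ⟨1, 1, fun t => by
      simp only [pow_one, one_mul]
      have : ‖t‖ ≤ ‖((t, 0) : ℝ × ℝ)‖ := norm_fst_le ((t, 0) : ℝ × ℝ)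
      linarith⟩

@[simp] lemma lineR_apply (φ : SchwartzMap (ℝ × ℝ) ℝ) (t : ℝ) : lineR φ t = φ (t, 0) := rfl

lemma lineR_Dt (φ : SchwartzMap (ℝ × ℝ) ℝ) :
    lineR (Dt φ) = SchwartzMap.derivCLM ℝ ℝ (lineR φ) := by
  ext t
  simp only [lineR_apply, SchwartzMap.derivCLM_apply]
  have h1 : HasFDerivAt (fun s : ℝ => ((s, 0) : ℝ × ℝ)) (ContinuousLinearMap.inl ℝ ℝ ℝ) t :=
    (ContinuousLinearMap.inl ℝ ℝ ℝ).hasFDerivAt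
  have h2 : HasFDerivAt φ (fderiv ℝ φ (t, 0)) (t, 0) :=
    (φ.differentiableAt).hasFDerivAt
  have h3 : HasDerivAt (fun s : ℝ => φ (s, 0))
      ((fderiv ℝ φ (t, 0)).comp (ContinuousLinearMap.inl ℝ ℝ ℝ) 1) t :=
    (h2.comp t h1).hasDerivAt
  have hder : deriv (fun s : ℝ => φ (s, 0)) t = fderiv ℝ φ (t, 0) (1, 0) := by
    simpa using h3.deriv
  rw [show (⇑(lineR φ) : ℝ → ℝ) = fun s : ℝ => φ (s, 0) from rfl, hder]
  simp [Dt, SchwartzMap.lineDerivOp_apply_eq_fderiv]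

/-! ### Commutation of partial derivatives -/

lemma pderiv_comm (m₁ m₂ : ℝ × ℝ) (φ : SchwartzMap (ℝ × ℝ) ℝ) :
    LineDeriv.lineDerivOpCLM ℝ (SchwartzMap (ℝ × ℝ) ℝ) m₁ (LineDeriv.lineDerivOpCLM ℝ (SchwartzMap (ℝ × ℝ) ℝ) m₂ φ)
      = LineDeriv.lineDerivOpCLM ℝ (SchwartzMap (ℝ × ℝ) ℝ) m₂ (LineDeriv.lineDerivOpCLM ℝ (SchwartzMap (ℝ × ℝ) ℝ) m₁ φ) := by
  ext x
  simp only [LineDeriv.lineDerivOpCLM_apply, SchwartzMap.lineDerivOp_apply_eq_fderiv]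
  have hφ : ∀ y, HasFDerivAt (⇑φ) (fderiv ℝ (⇑φ) y) y := fun y => φ.differentiableAt.hasFDerivAt
  have hf' : ContDiff ℝ 1 (fderiv ℝ (⇑φ)) := (φ.smooth ⊤).fderiv_right (by norm_cast)
  have hx : HasFDerivAt (fderiv ℝ (⇑φ)) (fderiv ℝ (fderiv ℝ (⇑φ)) x) x :=
    (hf'.differentiable one_ne_zero).differentiableAt.hasFDerivAt
  have hsymm := second_derivative_symmetric hφ hx m₂ m₁
  have hdiff : Differentiable ℝ (fderiv ℝ (⇑φ)) := hf'.differentiable one_ne_zero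
  have e : ∀ m : ℝ × ℝ, fderiv ℝ (fun y => fderiv ℝ (⇑φ) y m) x
      = (fderiv ℝ (fderiv ℝ (⇑φ)) x).flip m := by
    intro m
    have h := fderiv_clm_apply (c := fderiv ℝ (⇑φ)) (u := fun _ => m) (x := x)
      hdiff.differentiableAt (differentiableAt_const m)
    simpa using h
  calc fderiv ℝ (⇑(LineDeriv.lineDerivOpCLM ℝ (SchwartzMap (ℝ × ℝ) ℝ) m₂ φ)) x m₁
      = fderiv ℝ (fun y => fderiv ℝ (⇑φ) y m₂) x m₁ := rfl
    _ = fderiv ℝ (fderiv ℝ (⇑φ)) x m₁ m₂ := by rw [e m₂]; rfl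
    _ = fderiv ℝ (fderiv ℝ (⇑φ)) x m₂ m₁ := hsymm.symm
    _ = fderiv ℝ (fun y => fderiv ℝ (⇑φ) y m₁) x m₂ := by rw [e m₁]; rfl
    _ = fderiv ℝ (⇑(LineDeriv.lineDerivOpCLM ℝ (SchwartzMap (ℝ × ℝ) ℝ) m₁ φ)) x m₂ := rfl

lemma Dx_Dt (φ : SchwartzMap (ℝ × ℝ) ℝ) : Dx (Dt φ) = Dt (Dx φ) :=
  pderiv_comm _ _ φ

lemma Dx_wave (φ : SchwartzMap (ℝ × ℝ) ℝ) : Dx (waveOp φ) = waveOp (Dx φ) := by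
  unfold waveOp
  rw [show Dx (-(Dt (Dt φ)) + Dx (Dx φ))
      = -(Dx (Dt (Dt φ))) + Dx (Dx (Dx φ)) from by
    unfold Dx; rw [map_add, map_neg]]
  rw [Dx_Dt, Dx_Dt]

lemma Dxiter_wave (k : ℕ) (φ : SchwartzMap (ℝ × ℝ) ℝ) :
    Dx^[k] (waveOp φ) = waveOp (Dx^[k] φ) := by
  induction k with
  | zero => rfl
  | succ k ih =>
    rw [Function.iterate_succ_apply', Function.iterate_succ_apply', ih, Dx_wave]

/-! ### Integrability and integration by parts -/

lemma integ_tg {b : ℝ → ℝ} (hb : b.HasTemperateGrowth) (ψ : SchwartzMap ℝ ℝ) :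
    Integrable (fun t => b t * ψ t) := by
  have h := (SchwartzMap.bilinLeftCLM (ContinuousLinearMap.mul ℝ ℝ) hb ψ).integrable (μ := volume)
  have e : (⇑(SchwartzMap.bilinLeftCLM (ContinuousLinearMap.mul ℝ ℝ) hb ψ) : ℝ → ℝ)
      = fun t => ψ t * b t := rfl
  rw [e] at h
  simpa [mul_comm] using h

lemma ibp1 {b : ℝ → ℝ} (hb : b.HasTemperateGrowth) (ψ : SchwartzMap ℝ ℝ) :
    ∫ t : ℝ, b t * (SchwartzMap.derivCLM ℝ ℝ ψ) t = - ∫ t : ℝ, deriv b t * ψ t := by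
  have hu : ∀ x : ℝ, HasDerivAt b (deriv b x) x := fun x =>
    ((hb.1.differentiable (by norm_cast)).differentiableAt).hasDerivAt
  have hv : ∀ x : ℝ, HasDerivAt (⇑ψ) ((SchwartzMap.derivCLM ℝ ℝ ψ) x) x := fun x =>
    ψ.differentiableAt.hasDerivAt
  exact integral_mul_deriv_eq_deriv_mul_of_integrable (fun x _ => hu x) (fun x _ => hv x)
    (integ_tg hb (SchwartzMap.derivCLM ℝ ℝ ψ)) (integ_tg (tg_deriv hb) ψ) (integ_tg hb ψ)

lemma ibp2 {b : ℝ → ℝ} (hb : b.HasTemperateGrowth) (ψ : SchwartzMap ℝ ℝ) :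
    ∫ t : ℝ, b t * (SchwartzMap.derivCLM ℝ ℝ (SchwartzMap.derivCLM ℝ ℝ ψ)) t
      = ∫ t : ℝ, deriv (deriv b) t * ψ t := by
  rw [ibp1 hb (SchwartzMap.derivCLM ℝ ℝ ψ), ibp1 (tg_deriv hb) ψ, neg_neg]

/-- The key integration-by-parts identity for the wave operator. -/
lemma key {b : ℝ → ℝ} (hb : b.HasTemperateGrowth) (ψ : SchwartzMap (ℝ × ℝ) ℝ) :
    ∫ t : ℝ, b t * (waveOp ψ) (t, 0)
      = (∫ t : ℝ, b t * (Dx (Dx ψ)) (t, 0)) - ∫ t : ℝ, deriv (deriv b) t * ψ (t, 0) := by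
  have e : (fun t : ℝ => b t * (waveOp ψ) (t, 0))
      = fun t : ℝ => b t * (lineR (Dx (Dx ψ))) t - b t * (lineR (Dt (Dt ψ))) t := by
    funext t
    have : (waveOp ψ) (t, 0) = -(Dt (Dt ψ)) (t, 0) + (Dx (Dx ψ)) (t, 0) := by
      rfl
    rw [this]; simp only [lineR_apply]; ring
  rw [e, integral_sub (integ_tg hb _) (integ_tg hb _)]
  congr 1
  have h2 : lineR (Dt (Dt ψ)) = SchwartzMap.derivCLM ℝ ℝ (SchwartzMap.derivCLM ℝ ℝ (lineR ψ)) := by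
    rw [lineR_Dt, lineR_Dt]
  rw [h2]
  exact ibp2 hb (lineR ψ)

lemma key2 {b : ℝ → ℝ} (hb : b.HasTemperateGrowth) (k : ℕ) (φ : SchwartzMap (ℝ × ℝ) ℝ) :
    ∫ t : ℝ, b t * (Dx^[k] (waveOp φ)) (t, 0)
      = (∫ t : ℝ, b t * (Dx^[k + 2] φ) (t, 0))
        - ∫ t : ℝ, deriv (deriv b) t * (Dx^[k] φ) (t, 0) := by
  rw [Dxiter_wave]
  have h := key hb (Dx^[k] φ)
  rwa [show Dx (Dx (Dx^[k] φ)) = Dx^[k + 2] φ from by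
    rw [← Function.iterate_succ_apply' Dx k, ← Function.iterate_succ_apply' Dx (k + 1)]] at h

/-! ### Sum manipulation lemmas -/

lemma telescope (f g p q : ℕ → ℝ) (M : ℕ) :
    ∑ i ∈ Finset.range M, ((f (i + 1) - f i + p i) - (g (i + 1) - g i + q i))
      = ((f M - f 0) + ∑ i ∈ Finset.range M, p i)
        - ((g M - g 0) + ∑ i ∈ Finset.range M, q i) := by
  induction M with
  | zero => simp
  | succ m ih =>
    rw [Finset.sum_range_succ, ih, Finset.sum_range_succ, Finset.sum_range_succ]
    ring

lemma sum_range_even_odd (f : ℕ → ℝ) (m : ℕ) :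
    ∑ n ∈ Finset.range (2 * m), f n
      = ∑ k ∈ Finset.range m, f (2 * k) + ∑ k ∈ Finset.range m, f (2 * k + 1) := by
  induction m with
  | zero => simp
  | succ m ih =>
    have h2 : 2 * (m + 1) = (2 * m + 1) + 1 := by ring
    rw [h2, Finset.sum_range_succ, Finset.sum_range_succ, Finset.sum_range_succ,
      Finset.sum_range_succ, ih]
    ring

lemma deriv_sum_tg (m : ℕ) (h : ℕ → ℝ → ℝ) (hh : ∀ n, n < m → (h n).HasTemperateGrowth) :
    deriv (fun t => ∑ n ∈ Finset.range m, h n t)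
      = fun t => ∑ n ∈ Finset.range m, deriv (h n) t := by
  funext t
  rw [deriv_fun_sum]
  intro n hn
  exact ((hh n (Finset.mem_range.1 hn)).1.differentiable (by norm_cast)).differentiableAt

lemma deriv2_sum (m : ℕ) (g : ℕ → ℝ → ℝ) (hg : ∀ n, n < m → (g n).HasTemperateGrowth)
    (k : ℕ → ℕ) :
    deriv (deriv (fun t => ∑ n ∈ Finset.range m, iteratedDeriv (k n) (g n) t))
      = fun t => ∑ n ∈ Finset.range m, iteratedDeriv (k n + 2) (g n) t := by
  have tg1 : ∀ n, n < m → Function.HasTemperateGrowth (iteratedDeriv (k n) (g n)) :=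
    fun n hn => tg_iteratedDeriv (hg n hn) (k n)
  have e1 : deriv (fun t => ∑ n ∈ Finset.range m, iteratedDeriv (k n) (g n) t)
      = fun t => ∑ n ∈ Finset.range m, iteratedDeriv (k n + 1) (g n) t := by
    rw [deriv_sum_tg m _ tg1]
    funext t
    exact Finset.sum_congr rfl fun n _ => by rw [iteratedDeriv_succ]
  rw [e1, deriv_sum_tg m _ (fun n hn => tg_iteratedDeriv (hg n hn) (k n + 1))]
  funext t
  exact Finset.sum_congr rfl fun n _ => congrFun (iteratedDeriv_succ).symm t

/-! ### The telescoping coefficient functions -/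

/-- `cc a M j i = Σ_{n<M+1-i} a_{2n+2i+j}^{(2n)}`. -/
noncomputable def cc (a : ℕ → ℝ → ℝ) (M j i : ℕ) : ℝ → ℝ :=
  fun t => ∑ n ∈ Finset.range (M + 1 - i), iteratedDeriv (2 * n) (a (2 * n + 2 * i + j)) t

lemma cc_apply (a : ℕ → ℝ → ℝ) (M j i : ℕ) (t : ℝ) :
    cc a M j i t = ∑ n ∈ Finset.range (M + 1 - i),
      iteratedDeriv (2 * n) (a (2 * n + 2 * i + j)) t := rfl

lemma tg_cc {a : ℕ → ℝ → ℝ} {M j : ℕ} (ha : ∀ n, n ≤ 2 * M + 1 → (a n).HasTemperateGrowth)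
    (hj : j ≤ 1) (i : ℕ) : (cc a M j i).HasTemperateGrowth := by
  unfold cc
  exact tg_sum fun n hn =>
    tg_iteratedDeriv (ha _ (by have := Finset.mem_range.1 hn; omega)) _

lemma cc_deriv2 {a : ℕ → ℝ → ℝ} {M j : ℕ}
    (ha : ∀ n, n ≤ 2 * M + 1 → (a n).HasTemperateGrowth) (hj : j ≤ 1)
    {i : ℕ} (hi : i ≤ M) :
    deriv (deriv (cc a M j (i + 1))) = fun t => cc a M j i t - a (2 * i + j) t := by
  unfold cc
  rw [deriv2_sum (M + 1 - (i + 1)) (fun n => a (2 * n + 2 * (i + 1) + j))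
    (fun n hn => ha _ (by omega)) (fun n => 2 * n)]
  funext t
  rw [show M + 1 - i = (M - i) + 1 by omega, Finset.sum_range_succ',
    show M + 1 - (i + 1) = M - i by omega]
  have e0 : iteratedDeriv (2 * 0) (a (2 * 0 + 2 * i + j)) t = a (2 * i + j) t := by
    norm_num
  rw [e0, add_sub_cancel_right]
  exact Finset.sum_congr rfl fun n _ => by
    have h2 : 2 * n + 2 * (i + 1) + j = 2 * (n + 1) + 2 * i + j := by ring
    have h1 : 2 * (n + 1) = 2 * n + 2 := by ring
    rw [h2, h1]

lemma cc_last {a : ℕ → ℝ → ℝ} {M j : ℕ} : cc a M j M = a (2 * M + j) := by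
  funext t
  unfold cc
  rw [show M + 1 - M = 1 by omega, Finset.sum_range_one]
  norm_num

/-- The main telescoping step. -/
lemma step {a : ℕ → ℝ → ℝ} {M j : ℕ}
    (ha : ∀ n, n ≤ 2 * M + 1 → (a n).HasTemperateGrowth) (hj : j ≤ 1)
    {i : ℕ} (hi : i ≤ M) (k : ℕ) (φ : SchwartzMap (ℝ × ℝ) ℝ) :
    ∫ t : ℝ, cc a M j (i + 1) t * (Dx^[k] (waveOp φ)) (t, 0)
      = (∫ t : ℝ, cc a M j (i + 1) t * (Dx^[k + 2] φ) (t, 0))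
        - (∫ t : ℝ, cc a M j i t * (Dx^[k] φ) (t, 0))
        + ∫ t : ℝ, a (2 * i + j) t * (Dx^[k] φ) (t, 0) := by
  rw [key2 (tg_cc ha hj (i + 1)) k φ, cc_deriv2 ha hj hi]
  have hsub : ∫ t : ℝ, (cc a M j i t - a (2 * i + j) t) * (Dx^[k] φ) (t, 0)
      = (∫ t : ℝ, cc a M j i t * (Dx^[k] φ) (t, 0))
        - ∫ t : ℝ, a (2 * i + j) t * (Dx^[k] φ) (t, 0) := by
    have h1 : Integrable (fun t : ℝ => cc a M j i t * (Dx^[k] φ) (t, 0)) :=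
      integ_tg (tg_cc ha hj i) (lineR (Dx^[k] φ))
    have h2 : Integrable (fun t : ℝ => a (2 * i + j) t * (Dx^[k] φ) (t, 0)) :=
      integ_tg (ha _ (by omega)) (lineR (Dx^[k] φ))
    rw [show (fun t : ℝ => (cc a M j i t - a (2 * i + j) t) * (Dx^[k] φ) (t, 0))
        = fun t : ℝ => cc a M j i t * (Dx^[k] φ) (t, 0)
          - a (2 * i + j) t * (Dx^[k] φ) (t, 0) from funext fun t => by ring]
    exact integral_sub h1 h2
  rw [hsub]
  ring

/-- Theorem 1 of the paper (weak form): if `T` weakly solves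
`□T = Σ_{n=0}^N aₙ(t) δ⁽ⁿ⁾(x)` with `N` odd, then `T̄ = T − D` weakly solves
`□T̄ = G(t) δ(x) + F(t) δ'(x)`. -/
theorem theorem1_weak_form (N : ℕ) (hN : Odd N) (a : ℕ → ℝ → ℝ)
    (ha : ∀ n ≤ N, Function.HasTemperateGrowth (a n))
    (G F : ℝ → ℝ)
    (hG : G = fun t => ∑ n ∈ Finset.range ((N - 1) / 2 + 1),
      iteratedDeriv (2 * n) (a (2 * n)) t)
    (hF : F = fun t => ∑ n ∈ Finset.range ((N - 1) / 2 + 1),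
      iteratedDeriv (2 * n) (a (2 * n + 1)) t)
    (T : SchwartzMap (ℝ × ℝ) ℝ →L[ℝ] ℝ)
    (hT : ∀ φ : SchwartzMap (ℝ × ℝ) ℝ,
      T (waveOp φ) = ∑ n ∈ Finset.range (N + 1),
        ∫ t : ℝ, a n t * ((-1 : ℝ) ^ n * (Dx^[n] φ) (t, 0)))
    (D Tbar : SchwartzMap (ℝ × ℝ) ℝ → ℝ)
    (hD : D = fun φ => ∑ i ∈ Finset.range ((N - 1) / 2),
      ((∫ t : ℝ, (∑ n ∈ Finset.range ((N - 1) / 2 - i),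
          iteratedDeriv (2 * n) (a (2 * n + 2 * i + 2)) t) * (Dx^[2 * i] φ) (t, 0))
        - ∫ t : ℝ, (∑ n ∈ Finset.range ((N - 1) / 2 - i),
          iteratedDeriv (2 * n) (a (2 * n + 2 * i + 3)) t) * (Dx^[2 * i + 1] φ) (t, 0)))
    (hTbar : Tbar = fun φ => T φ - D φ) :
    ∀ φ : SchwartzMap (ℝ × ℝ) ℝ,
      Tbar (waveOp φ) = (∫ t : ℝ, G t * φ (t, 0)) - ∫ t : ℝ, F t * (Dx φ) (t, 0) := by
  intro φ
  obtain ⟨M, hNM⟩ := hN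
  have hM : (N - 1) / 2 = M := by omega
  have haM : ∀ n, n ≤ 2 * M + 1 → (a n).HasTemperateGrowth := fun n hn => ha n (by omega)
  subst hG hF hD hTbar
  simp only [hM]
  -- Step 1: split `T (waveOp φ)` into even and odd parts.
  have hT1 : T (waveOp φ)
      = (∑ k ∈ Finset.range (M + 1), ∫ t : ℝ, a (2 * k) t * (Dx^[2 * k] φ) (t, 0))
        - ∑ k ∈ Finset.range (M + 1), ∫ t : ℝ, a (2 * k + 1) t * (Dx^[2 * k + 1] φ) (t, 0) := by
    rw [hT φ, show N + 1 = 2 * (M + 1) by omega, sum_range_even_odd]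
    rw [sub_eq_add_neg, ← Finset.sum_neg_distrib]
    congr 1
    · refine Finset.sum_congr rfl fun k _ => ?_
      have he : ((-1 : ℝ)) ^ (2 * k) = 1 := by rw [pow_mul]; norm_num
      simp only [he, one_mul]
    · refine Finset.sum_congr rfl fun k _ => ?_
      have ho : ((-1 : ℝ)) ^ (2 * k + 1) = -1 := by rw [pow_succ, pow_mul]; norm_num
      rw [← integral_neg]
      exact integral_congr_ae (.of_forall fun t => by rw [ho]; ring)
  -- Step 2: evaluate the even terms of `D (waveOp φ)`.
  have hDe : ∀ i ∈ Finset.range M,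
      (∫ t : ℝ, (∑ n ∈ Finset.range (M - i),
          iteratedDeriv (2 * n) (a (2 * n + 2 * i + 2)) t) * (Dx^[2 * i] (waveOp φ)) (t, 0))
        = (∫ t : ℝ, cc a M 0 (i + 1) t * (Dx^[2 * (i + 1)] φ) (t, 0))
          - (∫ t : ℝ, cc a M 0 i t * (Dx^[2 * i] φ) (t, 0))
          + ∫ t : ℝ, a (2 * i) t * (Dx^[2 * i] φ) (t, 0) := by
    intro i hi
    have hi' : i ≤ M := le_of_lt (Finset.mem_range.1 hi)
    have h1 : (∫ t : ℝ, (∑ n ∈ Finset.range (M - i),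
        iteratedDeriv (2 * n) (a (2 * n + 2 * i + 2)) t) * (Dx^[2 * i] (waveOp φ)) (t, 0))
        = ∫ t : ℝ, cc a M 0 (i + 1) t * (Dx^[2 * i] (waveOp φ)) (t, 0) := by
      refine integral_congr_ae (.of_forall fun t => ?_)
      have hcc : cc a M 0 (i + 1) t = ∑ n ∈ Finset.range (M - i),
          iteratedDeriv (2 * n) (a (2 * n + 2 * i + 2)) t := by
        rw [cc_apply, show M + 1 - (i + 1) = M - i by omega]
        exact Finset.sum_congr rfl fun n _ => by
          rw [show 2 * n + 2 * (i + 1) + 0 = 2 * n + 2 * i + 2 by ring]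
      beta_reduce
      rw [hcc]
    rw [h1, step haM (by norm_num) hi' (2 * i) φ,
      show 2 * i + 2 = 2 * (i + 1) by ring, show 2 * i + 0 = 2 * i by ring]
  -- Step 3: evaluate the odd terms of `D (waveOp φ)`.
  have hDo : ∀ i ∈ Finset.range M,
      (∫ t : ℝ, (∑ n ∈ Finset.range (M - i),
          iteratedDeriv (2 * n) (a (2 * n + 2 * i + 3)) t) * (Dx^[2 * i + 1] (waveOp φ)) (t, 0))
        = (∫ t : ℝ, cc a M 1 (i + 1) t * (Dx^[2 * (i + 1) + 1] φ) (t, 0))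
          - (∫ t : ℝ, cc a M 1 i t * (Dx^[2 * i + 1] φ) (t, 0))
          + ∫ t : ℝ, a (2 * i + 1) t * (Dx^[2 * i + 1] φ) (t, 0) := by
    intro i hi
    have hi' : i ≤ M := le_of_lt (Finset.mem_range.1 hi)
    have h1 : (∫ t : ℝ, (∑ n ∈ Finset.range (M - i),
        iteratedDeriv (2 * n) (a (2 * n + 2 * i + 3)) t) * (Dx^[2 * i + 1] (waveOp φ)) (t, 0))
        = ∫ t : ℝ, cc a M 1 (i + 1) t * (Dx^[2 * i + 1] (waveOp φ)) (t, 0) := by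
      refine integral_congr_ae (.of_forall fun t => ?_)
      have hcc : cc a M 1 (i + 1) t = ∑ n ∈ Finset.range (M - i),
          iteratedDeriv (2 * n) (a (2 * n + 2 * i + 3)) t := by
        rw [cc_apply, show M + 1 - (i + 1) = M - i by omega]
        exact Finset.sum_congr rfl fun n _ => by
          rw [show 2 * n + 2 * (i + 1) + 1 = 2 * n + 2 * i + 3 by ring]
      beta_reduce
      rw [hcc]
    rw [h1, step haM (by norm_num) hi' (2 * i + 1) φ,
      show 2 * i + 1 + 2 = 2 * (i + 1) + 1 by ring]
  -- Step 4: telescope the sum defining `D (waveOp φ)`.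
  have hsum : (∑ i ∈ Finset.range M,
      ((∫ t : ℝ, (∑ n ∈ Finset.range (M - i),
          iteratedDeriv (2 * n) (a (2 * n + 2 * i + 2)) t) * (Dx^[2 * i] (waveOp φ)) (t, 0))
        - ∫ t : ℝ, (∑ n ∈ Finset.range (M - i),
          iteratedDeriv (2 * n) (a (2 * n + 2 * i + 3)) t) * (Dx^[2 * i + 1] (waveOp φ)) (t, 0)))
      = (((∫ t : ℝ, cc a M 0 M t * (Dx^[2 * M] φ) (t, 0))
            - ∫ t : ℝ, cc a M 0 0 t * (Dx^[2 * 0] φ) (t, 0))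
          + ∑ i ∈ Finset.range M, ∫ t : ℝ, a (2 * i) t * (Dx^[2 * i] φ) (t, 0))
        - (((∫ t : ℝ, cc a M 1 M t * (Dx^[2 * M + 1] φ) (t, 0))
            - ∫ t : ℝ, cc a M 1 0 t * (Dx^[2 * 0 + 1] φ) (t, 0))
          + ∑ i ∈ Finset.range M, ∫ t : ℝ, a (2 * i + 1) t * (Dx^[2 * i + 1] φ) (t, 0)) := by
    rw [Finset.sum_congr rfl fun i hi => by rw [hDe i hi, hDo i hi]]
    exact telescope (fun i => ∫ t : ℝ, cc a M 0 i t * (Dx^[2 * i] φ) (t, 0))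
      (fun i => ∫ t : ℝ, cc a M 1 i t * (Dx^[2 * i + 1] φ) (t, 0))
      (fun i => ∫ t : ℝ, a (2 * i) t * (Dx^[2 * i] φ) (t, 0))
      (fun i => ∫ t : ℝ, a (2 * i + 1) t * (Dx^[2 * i + 1] φ) (t, 0)) M
  -- Step 5: identify the boundary terms.
  have hueM : (∫ t : ℝ, cc a M 0 M t * (Dx^[2 * M] φ) (t, 0))
      = ∫ t : ℝ, a (2 * M) t * (Dx^[2 * M] φ) (t, 0) := by
    rw [cc_last, show 2 * M + 0 = 2 * M by ring]
  have huoM : (∫ t : ℝ, cc a M 1 M t * (Dx^[2 * M + 1] φ) (t, 0))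
      = ∫ t : ℝ, a (2 * M + 1) t * (Dx^[2 * M + 1] φ) (t, 0) := by
    rw [cc_last]
  have hue0 : (∫ t : ℝ, cc a M 0 0 t * (Dx^[2 * 0] φ) (t, 0))
      = ∫ t : ℝ, (∑ n ∈ Finset.range (M + 1), iteratedDeriv (2 * n) (a (2 * n)) t)
          * φ (t, 0) := by
    refine integral_congr_ae (.of_forall fun t => ?_)
    have : (Dx^[2 * 0] φ) = φ := rfl
    rw [this]
    have hcc : cc a M 0 0 t = ∑ n ∈ Finset.range (M + 1),
        iteratedDeriv (2 * n) (a (2 * n)) t := by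
      rw [cc_apply]
      norm_num
    beta_reduce
    rw [hcc]
  have huo0 : (∫ t : ℝ, cc a M 1 0 t * (Dx^[2 * 0 + 1] φ) (t, 0))
      = ∫ t : ℝ, (∑ n ∈ Finset.range (M + 1), iteratedDeriv (2 * n) (a (2 * n + 1)) t)
          * (Dx φ) (t, 0) := by
    refine integral_congr_ae (.of_forall fun t => ?_)
    have : (Dx^[2 * 0 + 1] φ) = Dx φ := by
      rw [show 2 * 0 + 1 = 1 by ring, Function.iterate_one]
    rw [this]
    have hcc : cc a M 1 0 t = ∑ n ∈ Finset.range (M + 1),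
        iteratedDeriv (2 * n) (a (2 * n + 1)) t := by
      rw [cc_apply]
      norm_num
    beta_reduce
    rw [hcc]
  -- Step 6: put everything together.
  rw [hT1, hsum, hueM, huoM, hue0, huo0, Finset.sum_range_succ, Finset.sum_range_succ]
  ring
end

section
/- Let N be an odd natural number and let a₀,…,a_N : ℝ → ℝ be smooth functions all of whose derivatives have at most polynomial growth. Define G(t) = Σ_{n=0}^{(N−1)/2} a_{2n}^{(2n)}(t) and F(t) = Σ_{n=0}^{(N−1)/2} a_{2n+1}^{(2n)}(t). Let D be the tempered distribution on ℝ² given by D(φ) = Σ_{i=0}^{(N−1)/2−1} [ ∫_ℝ (Σ_{n=0}^{(N−1)/2−1−i} a_{2n+2i+2}^{(2n)}(t)) (∂ₓ^{2i}φ)(t,0) dt − ∫_ℝ (Σ_{n=0}^{(N−1)/2−1−i} a_{2n+2i+3}^{(2n)}(t)) (∂ₓ^{2i+1}φ)(t,0) dt ]. Then for every Schwartz function φ : ℝ² → ℝ, D(−∂ₜ²φ + ∂ₓ²φ) = Σ_{n=0}^{N} ∫_ℝ a_n(t)(−1)ⁿ(∂ₓⁿφ)(t,0) dt − ∫_ℝ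 G(t)φ(t,0) dt + ∫_ℝ F(t)(∂ₓφ)(t,0) dt. (That is, □D = Σ_{n=0}^N a_nδ⁽ⁿ⁾ − Gδ − Fδ' as distributions.) -/
open MeasureTheory SchwartzMap Real
open scoped ContDiff

namespace WaveAux

lemma htg_deriv {b : ℝ → ℝ} (hb : Function.HasTemperateGrowth b) :
    Function.HasTemperateGrowth (deriv b) := by
  refine ⟨(contDiff_infty_iff_deriv.mp hb.1).2, fun n => ?_⟩
  obtain ⟨k, C, h⟩ := hb.2 (n + 1)
  refine ⟨k, C, fun x => ?_⟩
  have e : ‖iteratedFDeriv ℝ n (deriv b) x‖ = ‖iteratedFDeriv ℝ (n + 1) b x‖ := by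
    rw [norm_iteratedFDeriv_eq_norm_iteratedDeriv, norm_iteratedFDeriv_eq_norm_iteratedDeriv,
      iteratedDeriv_succ']
  rw [e]; exact h x

lemma htg_add {f g : ℝ → ℝ} (hf : Function.HasTemperateGrowth f)
    (hg : Function.HasTemperateGrowth g) :
    Function.HasTemperateGrowth (fun x => f x + g x) := by
  refine ⟨hf.1.add hg.1, fun n => ?_⟩
  obtain ⟨kf, Cf, hCf0, hf'⟩ := hf.norm_iteratedFDeriv_le_uniform n
  obtain ⟨kg, Cg, hCg0, hg'⟩ := hg.norm_iteratedFDeriv_le_uniform n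
  refine ⟨max kf kg, Cf + Cg, fun x => ?_⟩
  have h1 : (1 : ℝ) ≤ 1 + ‖x‖ := le_add_of_nonneg_right (norm_nonneg _)
  calc ‖iteratedFDeriv ℝ n (fun x => f x + g x) x‖
      = ‖iteratedFDeriv ℝ n f x + iteratedFDeriv ℝ n g x‖ := by
        show ‖iteratedFDeriv ℝ n (f + g) x‖ = _
        rw [iteratedFDeriv_add_apply (hf.1.of_le (by exact_mod_cast le_top)).contDiffAt
          (hg.1.of_le (by exact_mod_cast le_top)).contDiffAt]
    _ ≤ ‖iteratedFDeriv ℝ n f x‖ + ‖iteratedFDeriv ℝ n g x‖ := norm_add_le _ _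
    _ ≤ Cf * (1 + ‖x‖) ^ kf + Cg * (1 + ‖x‖) ^ kg :=
        add_le_add (hf' n le_rfl x) (hg' n le_rfl x)
    _ ≤ Cf * (1 + ‖x‖) ^ max kf kg + Cg * (1 + ‖x‖) ^ max kf kg := by
        gcongr <;> first | exact h1 | exact le_max_left _ _ | exact le_max_right _ _
    _ = (Cf + Cg) * (1 + ‖x‖) ^ max kf kg := by ring

lemma htg_sum {ι : Type*} (s : Finset ι) (f : ι → ℝ → ℝ)
    (hf : ∀ i ∈ s, Function.HasTemperateGrowth (f i)) :
    Function.HasTemperateGrowth (fun x => ∑ i ∈ s, f i x) := by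
  induction s using Finset.cons_induction with
  | empty => simpa using Function.HasTemperateGrowth.zero
  | cons i s hi ih =>
    simp only [Finset.sum_cons]
    exact htg_add (hf i (Finset.mem_cons_self _ _))
      (ih fun j hj => hf j (Finset.mem_cons_of_mem hj))

lemma htg_iteratedDeriv {b : ℝ → ℝ} (hb : Function.HasTemperateGrowth b) (k : ℕ) :
    Function.HasTemperateGrowth (iteratedDeriv k b) := by
  induction k with
  | zero => simpa [iteratedDeriv_zero] using hb
  | succ n ih => rw [iteratedDeriv_succ]; exact htg_deriv ih

lemma integrable_htg_mul {b : ℝ → ℝ} (hb : Function.HasTemperateGrowth b) (g : 𝓢(ℝ, ℝ)) :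
    Integrable (fun t => b t * g t) := by
  have h := (SchwartzMap.bilinLeftCLM (ContinuousLinearMap.mul ℝ ℝ) hb g).integrable (μ := volume)
  have h2 : ⇑(SchwartzMap.bilinLeftCLM (ContinuousLinearMap.mul ℝ ℝ) hb g)
      = fun x => g x * b x := rfl
  rw [h2] at h
  simpa [mul_comm] using h

lemma ibp {b : ℝ → ℝ} (hb : Function.HasTemperateGrowth b) (g : 𝓢(ℝ, ℝ)) :
    ∫ t : ℝ, b t * deriv (⇑g) t = - ∫ t : ℝ, deriv b t * g t := by
  have hbd : Differentiable ℝ b := hb.1.differentiable (by simp)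
  apply integral_mul_deriv_eq_deriv_mul_of_integrable
  · exact fun x _ => (hbd x).hasDerivAt
  · exact fun x _ => g.differentiableAt.hasDerivAt
  · exact integrable_htg_mul hb (SchwartzMap.derivCLM ℝ ℝ g)
  · exact integrable_htg_mul (htg_deriv hb) g
  · exact integrable_htg_mul hb g

/-- The restriction to the `t`-axis as a continuous linear map on Schwartz space. -/
noncomputable def R : 𝓢(ℝ × ℝ, ℝ) →L[ℝ] 𝓢(ℝ, ℝ) :=
  SchwartzMap.compCLMOfAntilipschitz ℝ (g := fun t : ℝ => ((t, 0) : ℝ × ℝ))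
    ((ContinuousLinearMap.inl ℝ ℝ ℝ).hasTemperateGrowth)
    (AntilipschitzWith.of_le_mul_dist (K := 1) (fun x y => by
      simp [Prod.dist_eq, dist_nonneg]))

lemma R_def (φ : 𝓢(ℝ × ℝ, ℝ)) : ⇑(R φ) = fun t => φ (t, 0) := rfl

lemma integrable_restrict {b : ℝ → ℝ} (hb : Function.HasTemperateGrowth b)
    (ψ : 𝓢(ℝ × ℝ, ℝ)) : Integrable (fun t => b t * ψ (t, 0)) := by
  have h := integrable_htg_mul hb (R ψ)
  simpa only [R_def] using h

lemma Dt_restrict (ψ : 𝓢(ℝ × ℝ, ℝ)) (t : ℝ) :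
    (Dt ψ) (t, 0) = deriv (fun s => ψ (s, 0)) t := by
  have hL : HasFDerivAt (fun s : ℝ => ((s, 0) : ℝ × ℝ)) (ContinuousLinearMap.inl ℝ ℝ ℝ) t :=
    (ContinuousLinearMap.inl ℝ ℝ ℝ).hasFDerivAt
  have h : HasFDerivAt (fun s : ℝ => ψ (s, 0))
      ((fderiv ℝ ψ ((t, 0) : ℝ × ℝ)).comp (ContinuousLinearMap.inl ℝ ℝ ℝ)) t :=
    (ψ.differentiableAt.hasFDerivAt (x := ((t, 0) : ℝ × ℝ))).comp t hL
  have hd := h.hasDerivAt.deriv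
  rw [Dt, LineDeriv.lineDerivOpCLM_apply, SchwartzMap.lineDerivOp_apply_eq_fderiv, hd]
  simp

lemma second_deriv_eval (φ : 𝓢(ℝ × ℝ, ℝ)) (x v w : ℝ × ℝ) :
    fderiv ℝ (fun y => fderiv ℝ φ y v) x w = fderiv ℝ (fderiv ℝ (⇑φ)) x w v := by
  have hder : ContDiff ℝ ∞ (fderiv ℝ (⇑φ)) :=
    (φ.smooth ⊤).fderiv_right (m := ∞) (by exact_mod_cast le_top)
  have hc : HasFDerivAt (fun y => fderiv ℝ φ y v)
      ((ContinuousLinearMap.apply ℝ ℝ v).comp (fderiv ℝ (fderiv ℝ (⇑φ)) x)) x :=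
    ((ContinuousLinearMap.apply ℝ ℝ v).hasFDerivAt).comp x
      (hder.differentiable (by simp) x).hasFDerivAt
  rw [hc.fderiv]
  rfl

lemma Dx_Dt_comm (φ : 𝓢(ℝ × ℝ, ℝ)) : Dx (Dt φ) = Dt (Dx φ) := by
  ext x
  have hder : ContDiff ℝ ∞ (fderiv ℝ (⇑φ)) :=
    (φ.smooth ⊤).fderiv_right (m := ∞) (by exact_mod_cast le_top)
  have e1 : (Dx (Dt φ)) x
      = fderiv ℝ (fun y => fderiv ℝ (⇑φ) y ((1, 0) : ℝ × ℝ)) x ((0, 1) : ℝ × ℝ) := rfl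
  have e2 : (Dt (Dx φ)) x
      = fderiv ℝ (fun y => fderiv ℝ (⇑φ) y ((0, 1) : ℝ × ℝ)) x ((1, 0) : ℝ × ℝ) := rfl
  rw [e1, e2, second_deriv_eval, second_deriv_eval]
  exact second_derivative_symmetric (fun y => φ.differentiableAt.hasFDerivAt)
    (hder.differentiable (by simp) x).hasFDerivAt _ _

lemma Dx_wave (k : ℕ) (φ : 𝓢(ℝ × ℝ, ℝ)) : Dx^[k] (waveOp φ) = waveOp (Dx^[k] φ) := by
  induction k generalizing φ with
  | zero => rfl
  | succ n ih =>
    have h : Dx (waveOp φ) = waveOp (Dx φ) := by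
      rw [waveOp, waveOp, Dx, map_add, map_neg, ← Dx, ← Dx, Dx_Dt_comm, Dx_Dt_comm]
    rw [Function.iterate_succ_apply, h, ih, Function.iterate_succ_apply]

lemma wave_integral {b : ℝ → ℝ} (hb : Function.HasTemperateGrowth b) (ψ : 𝓢(ℝ × ℝ, ℝ)) :
    ∫ t : ℝ, b t * (waveOp ψ) (t, 0)
      = -(∫ t : ℝ, deriv (deriv b) t * ψ (t, 0)) + ∫ t : ℝ, b t * (Dx (Dx ψ)) (t, 0) := by
  have iA : Integrable (fun t : ℝ => b t * (Dt (Dt ψ)) (t, 0)) :=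
    integrable_restrict hb (Dt (Dt ψ))
  have iB : Integrable (fun t : ℝ => b t * (Dx (Dx ψ)) (t, 0)) :=
    integrable_restrict hb (Dx (Dx ψ))
  have iA' : Integrable (fun t : ℝ => -(b t * (Dt (Dt ψ)) (t, 0))) := iA.neg
  have h0 : (fun t : ℝ => b t * (waveOp ψ) (t, 0))
      = fun t => -(b t * (Dt (Dt ψ)) (t, 0)) + b t * (Dx (Dx ψ)) (t, 0) := by
    funext t
    have e : (waveOp ψ) (t, 0) = -((Dt (Dt ψ)) (t, 0)) + (Dx (Dx ψ)) (t, 0) := rfl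
    rw [e]; ring
  rw [h0, integral_add iA' iB, integral_neg]
  congr 2
  calc ∫ t : ℝ, b t * (Dt (Dt ψ)) (t, 0)
      = ∫ t : ℝ, b t * deriv (⇑(R (Dt ψ))) t := by
        rw [show (fun t : ℝ => b t * (Dt (Dt ψ)) (t, 0))
          = fun t => b t * deriv (⇑(R (Dt ψ))) t from funext fun t => by
            rw [Dt_restrict (Dt ψ) t, R_def]]
    _ = - ∫ t : ℝ, deriv b t * (R (Dt ψ)) t := ibp hb (R (Dt ψ))
    _ = - ∫ t : ℝ, deriv b t * deriv (⇑(R ψ)) t := by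
        rw [show (fun t : ℝ => deriv b t * (R (Dt ψ)) t)
          = fun t => deriv b t * deriv (⇑(R ψ)) t from funext fun t => by
            simp only [R_def]
            rw [Dt_restrict ψ t]]
    _ = - - ∫ t : ℝ, deriv (deriv b) t * (R ψ) t := by rw [ibp (htg_deriv hb) (R ψ)]
    _ = ∫ t : ℝ, deriv (deriv b) t * ψ (t, 0) := by
        rw [neg_neg,
          show (fun t : ℝ => deriv (deriv b) t * (R ψ) t)
            = fun t => deriv (deriv b) t * ψ (t, 0) from funext fun t => by rw [R_def]]

lemma deriv2_sum (m : ℕ) (c : ℕ → ℝ → ℝ)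
    (hc : ∀ n ∈ Finset.range m, Function.HasTemperateGrowth (c n)) (k : ℕ → ℕ) :
    deriv (deriv (fun t => ∑ n ∈ Finset.range m, iteratedDeriv (k n) (c n) t))
      = fun t => ∑ n ∈ Finset.range m, iteratedDeriv (k n + 2) (c n) t := by
  have step : ∀ (j : ℕ → ℕ),
      deriv (fun t => ∑ n ∈ Finset.range m, iteratedDeriv (j n) (c n) t)
        = fun t => ∑ n ∈ Finset.range m, iteratedDeriv (j n + 1) (c n) t := by
    intro j
    funext t
    rw [deriv_fun_sum (fun n hn =>
      ((htg_iteratedDeriv (hc n hn) (j n)).1.differentiable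
        (by simp)).differentiableAt)]
    exact Finset.sum_congr rfl fun n _ => by rw [iteratedDeriv_succ]
  rw [step k, step (fun n => k n + 1)]

lemma pair_sum (f : ℕ → ℝ) (m : ℕ) :
    ∑ n ∈ Finset.range (2 * m), f n = ∑ i ∈ Finset.range m, (f (2 * i) + f (2 * i + 1)) := by
  induction m with
  | zero => simp
  | succ k ih =>
    rw [show 2 * (k + 1) = 2 * k + 1 + 1 by ring, Finset.sum_range_succ, Finset.sum_range_succ,
      ih, Finset.sum_range_succ]
    ring

/-- `Sv a M i` is the sum `Σ_{n ≤ M-i} a_{2n+2i}^{(2n)}`. -/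
noncomputable def Sv (a : ℕ → ℝ → ℝ) (M i : ℕ) : ℝ → ℝ :=
  fun t => ∑ n ∈ Finset.range (M + 1 - i), iteratedDeriv (2 * n) (a (2 * n + 2 * i)) t

noncomputable def Tv (a : ℕ → ℝ → ℝ) (M i : ℕ) : ℝ → ℝ :=
  fun t => ∑ n ∈ Finset.range (M + 1 - i), iteratedDeriv (2 * n) (a (2 * n + 2 * i + 1)) t

lemma htg_Sv {a : ℕ → ℝ → ℝ} {M : ℕ} (ha : ∀ n ≤ 2 * M + 1, Function.HasTemperateGrowth (a n))
    (i : ℕ) : Function.HasTemperateGrowth (Sv a M i) :=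
  htg_sum _ _ fun n hn => htg_iteratedDeriv
    (ha _ (by have := Finset.mem_range.mp hn; omega)) _

lemma htg_Tv {a : ℕ → ℝ → ℝ} {M : ℕ} (ha : ∀ n ≤ 2 * M + 1, Function.HasTemperateGrowth (a n))
    (i : ℕ) : Function.HasTemperateGrowth (Tv a M i) :=
  htg_sum _ _ fun n hn => htg_iteratedDeriv
    (ha _ (by have := Finset.mem_range.mp hn; omega)) _

noncomputable def EE (a : ℕ → ℝ → ℝ) (M : ℕ) (φ : 𝓢(ℝ × ℝ, ℝ)) (i : ℕ) : ℝ :=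
  ∫ t : ℝ, Sv a M i t * (Dx^[2 * i] φ) (t, 0)

noncomputable def OO (a : ℕ → ℝ → ℝ) (M : ℕ) (φ : 𝓢(ℝ × ℝ, ℝ)) (i : ℕ) : ℝ :=
  ∫ t : ℝ, Tv a M i t * (Dx^[2 * i + 1] φ) (t, 0)

noncomputable def PP (a : ℕ → ℝ → ℝ) (M : ℕ) (φ : 𝓢(ℝ × ℝ, ℝ)) (i : ℕ) : ℝ :=
  EE a M φ i - OO a M φ i

lemma deriv2_Sv {a : ℕ → ℝ → ℝ} {M : ℕ}
    (ha : ∀ n ≤ 2 * M + 1, Function.HasTemperateGrowth (a n)) {i : ℕ} (hi : i ≤ M) :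
    deriv (deriv (Sv a M (i + 1))) = fun t => Sv a M i t - a (2 * i) t := by
  have hc : ∀ n ∈ Finset.range (M + 1 - (i + 1)),
      Function.HasTemperateGrowth (a (2 * n + 2 * (i + 1))) :=
    fun n hn => ha _ (by have := Finset.mem_range.mp hn; omega)
  have hd := deriv2_sum (M + 1 - (i + 1)) (fun n => a (2 * n + 2 * (i + 1))) hc (fun n => 2 * n)
  beta_reduce at hd
  have h0 : Sv a M (i + 1) = fun t => ∑ n ∈ Finset.range (M + 1 - (i + 1)),
      iteratedDeriv (2 * n) (a (2 * n + 2 * (i + 1))) t := rfl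
  rw [h0, hd]
  funext t
  show _ = (∑ n ∈ Finset.range (M + 1 - i), iteratedDeriv (2 * n) (a (2 * n + 2 * i)) t)
      - a (2 * i) t
  rw [show M + 1 - i = (M - i) + 1 by omega, Finset.sum_range_succ']
  have h4 : iteratedDeriv (2 * 0) (a (2 * 0 + 2 * i)) t = a (2 * i) t := by norm_num
  rw [h4, add_sub_cancel_right, show M + 1 - (i + 1) = M - i by omega]
  refine Finset.sum_congr rfl fun n _ => ?_
  rw [show 2 * (n + 1) + 2 * i = 2 * n + 2 * (i + 1) by ring, show 2 * (n + 1) = 2 * n + 2 by ring]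

lemma deriv2_Tv {a : ℕ → ℝ → ℝ} {M : ℕ}
    (ha : ∀ n ≤ 2 * M + 1, Function.HasTemperateGrowth (a n)) {i : ℕ} (hi : i ≤ M) :
    deriv (deriv (Tv a M (i + 1))) = fun t => Tv a M i t - a (2 * i + 1) t := by
  have hc : ∀ n ∈ Finset.range (M + 1 - (i + 1)),
      Function.HasTemperateGrowth (a (2 * n + 2 * (i + 1) + 1)) :=
    fun n hn => ha _ (by have := Finset.mem_range.mp hn; omega)
  have hd := deriv2_sum (M + 1 - (i + 1)) (fun n => a (2 * n + 2 * (i + 1) + 1)) hc (fun n => 2 * n)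
  beta_reduce at hd
  have h0 : Tv a M (i + 1) = fun t => ∑ n ∈ Finset.range (M + 1 - (i + 1)),
      iteratedDeriv (2 * n) (a (2 * n + 2 * (i + 1) + 1)) t := rfl
  rw [h0, hd]
  funext t
  show _ = (∑ n ∈ Finset.range (M + 1 - i), iteratedDeriv (2 * n) (a (2 * n + 2 * i + 1)) t)
      - a (2 * i + 1) t
  rw [show M + 1 - i = (M - i) + 1 by omega, Finset.sum_range_succ']
  have h4 : iteratedDeriv (2 * 0) (a (2 * 0 + 2 * i + 1)) t = a (2 * i + 1) t := by norm_num
  rw [h4, add_sub_cancel_right, show M + 1 - (i + 1) = M - i by omega]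
  refine Finset.sum_congr rfl fun n _ => ?_
  rw [show 2 * (n + 1) + 2 * i + 1 = 2 * n + 2 * (i + 1) + 1 by ring,
    show 2 * (n + 1) = 2 * n + 2 by ring]

lemma step {a : ℕ → ℝ → ℝ} {M : ℕ}
    (ha : ∀ n ≤ 2 * M + 1, Function.HasTemperateGrowth (a n)) (φ : 𝓢(ℝ × ℝ, ℝ))
    {i : ℕ} (hi : i < M) :
    (∫ t : ℝ, (∑ n ∈ Finset.range (M - i),
        iteratedDeriv (2 * n) (a (2 * n + 2 * i + 2)) t) * (Dx^[2 * i] (waveOp φ)) (t, 0))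
      - (∫ t : ℝ, (∑ n ∈ Finset.range (M - i),
        iteratedDeriv (2 * n) (a (2 * n + 2 * i + 3)) t) * (Dx^[2 * i + 1] (waveOp φ)) (t, 0))
    = (PP a M φ (i + 1) - PP a M φ i)
      + ((∫ t : ℝ, a (2 * i) t * (Dx^[2 * i] φ) (t, 0))
        - ∫ t : ℝ, a (2 * i + 1) t * (Dx^[2 * i + 1] φ) (t, 0)) := by
  have hii : i ≤ M := hi.le
  have eS : ∀ t : ℝ, (∑ n ∈ Finset.range (M - i),
      iteratedDeriv (2 * n) (a (2 * n + 2 * i + 2)) t) = Sv a M (i + 1) t := by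
    intro t
    show _ = ∑ n ∈ Finset.range (M + 1 - (i + 1)),
      iteratedDeriv (2 * n) (a (2 * n + 2 * (i + 1))) t
    rw [show M + 1 - (i + 1) = M - i by omega]
    exact Finset.sum_congr rfl fun n _ => by
      rw [show 2 * n + 2 * (i + 1) = 2 * n + 2 * i + 2 by ring]
  have eT : ∀ t : ℝ, (∑ n ∈ Finset.range (M - i),
      iteratedDeriv (2 * n) (a (2 * n + 2 * i + 3)) t) = Tv a M (i + 1) t := by
    intro t
    show _ = ∑ n ∈ Finset.range (M + 1 - (i + 1)),
      iteratedDeriv (2 * n) (a (2 * n + 2 * (i + 1) + 1)) t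
    rw [show M + 1 - (i + 1) = M - i by omega]
    exact Finset.sum_congr rfl fun n _ => by
      rw [show 2 * n + 2 * (i + 1) + 1 = 2 * n + 2 * i + 3 by ring]
  have hW2i : Dx^[2 * i] (waveOp φ) = waveOp (Dx^[2 * i] φ) := Dx_wave _ _
  have hW2i1 : Dx^[2 * i + 1] (waveOp φ) = waveOp (Dx^[2 * i + 1] φ) := Dx_wave _ _
  have hDxDx : Dx (Dx (Dx^[2 * i] φ)) = Dx^[2 * (i + 1)] φ := by
    rw [show 2 * (i + 1) = 2 * i + 1 + 1 by ring, Function.iterate_succ_apply',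
      Function.iterate_succ_apply']
  have hDxDx' : Dx (Dx (Dx^[2 * i + 1] φ)) = Dx^[2 * (i + 1) + 1] φ := by
    rw [show 2 * (i + 1) + 1 = 2 * i + 1 + 1 + 1 by ring]
    conv_rhs => rw [Function.iterate_succ_apply', Function.iterate_succ_apply']
  have heven := wave_integral (htg_Sv ha (i + 1)) (Dx^[2 * i] φ)
  rw [deriv2_Sv ha hii, hDxDx] at heven
  have hsub : (∫ t : ℝ, (Sv a M i t - a (2 * i) t) * (Dx^[2 * i] φ) (t, 0))
      = EE a M φ i - ∫ t : ℝ, a (2 * i) t * (Dx^[2 * i] φ) (t, 0) := by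
    rw [show (fun t : ℝ => (Sv a M i t - a (2 * i) t) * (Dx^[2 * i] φ) (t, 0))
        = fun t => Sv a M i t * (Dx^[2 * i] φ) (t, 0)
          - a (2 * i) t * (Dx^[2 * i] φ) (t, 0) from funext fun t => by ring,
      integral_sub (integrable_restrict (htg_Sv ha i) _)
        (integrable_restrict (ha (2 * i) (by omega)) _)]
    rfl
  rw [hsub] at heven
  have hodd := wave_integral (htg_Tv ha (i + 1)) (Dx^[2 * i + 1] φ)
  rw [deriv2_Tv ha hii, hDxDx'] at hodd
  have hsub' : (∫ t : ℝ, (Tv a M i t - a (2 * i + 1) t) * (Dx^[2 * i + 1] φ) (t, 0))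
      = OO a M φ i - ∫ t : ℝ, a (2 * i + 1) t * (Dx^[2 * i + 1] φ) (t, 0) := by
    rw [show (fun t : ℝ => (Tv a M i t - a (2 * i + 1) t) * (Dx^[2 * i + 1] φ) (t, 0))
        = fun t => Tv a M i t * (Dx^[2 * i + 1] φ) (t, 0)
          - a (2 * i + 1) t * (Dx^[2 * i + 1] φ) (t, 0) from funext fun t => by ring,
      integral_sub (integrable_restrict (htg_Tv ha i) _)
        (integrable_restrict (ha (2 * i + 1) (by omega)) _)]
    rfl
  rw [hsub'] at hodd
  simp only [eS, eT, hW2i, hW2i1]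
  rw [heven, hodd]
  simp only [PP, EE, OO]
  ring

end WaveAux

/-- The correction distribution `D` of Theorem 1 satisfies
`□D = Σ_{n=0}^N aₙ δ⁽ⁿ⁾ − G δ − F δ'` weakly. -/
theorem wave_of_correction_distribution (N : ℕ) (hN : Odd N) (a : ℕ → ℝ → ℝ)
    (ha : ∀ n ≤ N, Function.HasTemperateGrowth (a n))
    (G F : ℝ → ℝ)
    (hG : G = fun t => ∑ n ∈ Finset.range ((N - 1) / 2 + 1),
      iteratedDeriv (2 * n) (a (2 * n)) t)
    (hF : F = fun t => ∑ n ∈ Finset.range ((N - 1) / 2 + 1),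
      iteratedDeriv (2 * n) (a (2 * n + 1)) t)
    (D : SchwartzMap (ℝ × ℝ) ℝ → ℝ)
    (hD : D = fun φ => ∑ i ∈ Finset.range ((N - 1) / 2),
      ((∫ t : ℝ, (∑ n ∈ Finset.range ((N - 1) / 2 - i),
          iteratedDeriv (2 * n) (a (2 * n + 2 * i + 2)) t) * (Dx^[2 * i] φ) (t, 0))
        - ∫ t : ℝ, (∑ n ∈ Finset.range ((N - 1) / 2 - i),
          iteratedDeriv (2 * n) (a (2 * n + 2 * i + 3)) t) * (Dx^[2 * i + 1] φ) (t, 0))) :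
    ∀ φ : SchwartzMap (ℝ × ℝ) ℝ,
      D (waveOp φ) = (∑ n ∈ Finset.range (N + 1),
          ∫ t : ℝ, a n t * ((-1 : ℝ) ^ n * (Dx^[n] φ) (t, 0)))
        - (∫ t : ℝ, G t * φ (t, 0)) + ∫ t : ℝ, F t * (Dx φ) (t, 0) := by
  obtain ⟨M, rfl⟩ := hN
  subst hG hF hD
  intro φ
  have hM : (2 * M + 1 - 1) / 2 = M := by omega
  simp only [hM]
  rw [Finset.sum_congr rfl (fun i hi => WaveAux.step ha φ (Finset.mem_range.mp hi)),
    Finset.sum_add_distrib, Finset.sum_range_sub (WaveAux.PP a M φ)]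
  have hPM : WaveAux.PP a M φ M
      = (∫ t : ℝ, a (2 * M) t * (Dx^[2 * M] φ) (t, 0))
        - ∫ t : ℝ, a (2 * M + 1) t * (Dx^[2 * M + 1] φ) (t, 0) := by
    simp [WaveAux.PP, WaveAux.EE, WaveAux.OO, WaveAux.Sv, WaveAux.Tv,
      show M + 1 - M = 1 from by omega, Finset.sum_range_one, iteratedDeriv_zero]
  have hP0 : WaveAux.PP a M φ 0
      = (∫ t : ℝ, (∑ n ∈ Finset.range (M + 1), iteratedDeriv (2 * n) (a (2 * n)) t) * φ (t, 0))
        - ∫ t : ℝ, (∑ n ∈ Finset.range (M + 1),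
            iteratedDeriv (2 * n) (a (2 * n + 1)) t) * (Dx φ) (t, 0) := by
    simp [WaveAux.PP, WaveAux.EE, WaveAux.OO, WaveAux.Sv, WaveAux.Tv]
  rw [hPM, hP0]
  rw [show 2 * M + 1 + 1 = 2 * (M + 1) by ring, WaveAux.pair_sum]
  have hq : ∀ i ∈ Finset.range (M + 1),
      ((∫ t : ℝ, a (2 * i) t * ((-1 : ℝ) ^ (2 * i) * (Dx^[2 * i] φ) (t, 0)))
        + ∫ t : ℝ, a (2 * i + 1) t * ((-1 : ℝ) ^ (2 * i + 1) * (Dx^[2 * i + 1] φ) (t, 0)))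
      = (∫ t : ℝ, a (2 * i) t * (Dx^[2 * i] φ) (t, 0))
        - ∫ t : ℝ, a (2 * i + 1) t * (Dx^[2 * i + 1] φ) (t, 0) := by
    intro i _
    have he : (fun t : ℝ => a (2 * i) t * ((-1 : ℝ) ^ (2 * i) * (Dx^[2 * i] φ) (t, 0)))
        = fun t => a (2 * i) t * (Dx^[2 * i] φ) (t, 0) := by
      funext t; rw [pow_mul]; norm_num
    have ho : (fun t : ℝ => a (2 * i + 1) t * ((-1 : ℝ) ^ (2 * i + 1) * (Dx^[2 * i + 1] φ) (t, 0)))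
        = fun t => -(a (2 * i + 1) t * (Dx^[2 * i + 1] φ) (t, 0)) := by
      funext t; rw [pow_succ, pow_mul]; ring_nf
    rw [he, ho, integral_neg]; ring
  rw [Finset.sum_congr rfl hq, Finset.sum_range_succ]
  ring
end

section
/- The distribution ψ(t,x) = cos(t)δ(x) + H(x)sin(t−x) solves the advection equation ∂ₜψ + ∂ₓψ = cos(t)δ'(x) weakly; precisely, for every Schwartz function φ : ℝ² → ℝ, −∫_ℝ cos(t)(∂ₜφ + ∂ₓφ)(t,0) dt − ∫_ℝ ∫_{0}^{∞} sin(t−x)(∂ₜφ + ∂ₓφ)(t,x) dx dt = −∫_ℝ cos(t)(∂ₓφ)(t,0) dt. -/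
open MeasureTheory SchwartzMap Real Set Filter

lemma sch_bound (ψ : SchwartzMap (ℝ × ℝ) ℝ) :
    ∃ C : ℝ, ∀ (s : ℝ) (p : ℝ × ℝ), |s| ≤ ‖p‖ → ‖ψ p‖ ≤ C * (1 + s ^ 2)⁻¹ := by
  obtain ⟨C₀, _, h₀⟩ := ψ.decay 0 0
  obtain ⟨C₂, _, h₂⟩ := ψ.decay 2 0
  refine ⟨C₀ + C₂, fun s p hs => ?_⟩
  have h₀' := h₀ p
  have h₂' := h₂ p
  rw [norm_iteratedFDeriv_zero] at h₀' h₂'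
  simp only [pow_zero, one_mul] at h₀'
  have hs2 : s ^ 2 * ‖ψ p‖ ≤ C₂ := by
    calc s ^ 2 * ‖ψ p‖ = |s| ^ 2 * ‖ψ p‖ := by rw [sq_abs]
    _ ≤ ‖p‖ ^ 2 * ‖ψ p‖ :=
        mul_le_mul_of_nonneg_right (pow_le_pow_left₀ (abs_nonneg s) hs 2) (norm_nonneg _)
    _ ≤ C₂ := h₂'
  have hpos : (0:ℝ) < 1 + s ^ 2 := by positivity
  rw [← div_eq_mul_inv, le_div_iff₀ hpos]
  nlinarith [norm_nonneg (ψ p)]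

lemma line_integrable (ψ : SchwartzMap (ℝ × ℝ) ℝ) {g : ℝ → ℝ × ℝ} (hg : Continuous g)
    (h : ∀ s, |s| ≤ ‖g s‖) : Integrable (fun s => ψ (g s)) := by
  obtain ⟨C, hC⟩ := sch_bound ψ
  exact (integrable_inv_one_add_sq.const_mul C).mono'
    ((ψ.continuous.comp hg).aestronglyMeasurable)
    (Filter.Eventually.of_forall fun s => hC s (g s) (h s))

lemma line_tendsto (ψ : SchwartzMap (ℝ × ℝ) ℝ) {g : ℝ → ℝ × ℝ}
    (h : ∀ s, |s| ≤ ‖g s‖) {l : Filter ℝ} (hl : Tendsto (fun s => |s|) l atTop) :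
    Tendsto (fun s => ψ (g s)) l (nhds 0) := by
  obtain ⟨C, hC⟩ := sch_bound ψ
  apply squeeze_zero_norm (fun s => hC s (g s) (h s))
  have h1 : Tendsto (fun s : ℝ => 1 + s ^ 2) l atTop := by
    apply tendsto_atTop_add_const_left
    have := (tendsto_pow_atTop (two_ne_zero)).comp hl
    simpa [Function.comp_def, sq_abs] using this
  simpa using tendsto_const_nhds.mul h1.inv_tendsto_atTop

lemma mul_line_integrable (ψ : SchwartzMap (ℝ × ℝ) ℝ) {g : ℝ → ℝ × ℝ} (hg : Continuous g)
    (h : ∀ s, |s| ≤ ‖g s‖) {c : ℝ → ℝ} (hc : Continuous c) (hbd : ∀ t, |c t| ≤ 1) :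
    Integrable (fun s => c s * ψ (g s)) := by
  refine (line_integrable ψ hg h).norm.mono'
    ((hc.mul (ψ.continuous.comp hg)).aestronglyMeasurable)
    (Filter.Eventually.of_forall fun s => ?_)
  rw [norm_mul]
  calc ‖c s‖ * ‖ψ (g s)‖ ≤ 1 * ‖ψ (g s)‖ :=
        mul_le_mul_of_nonneg_right (hbd s) (norm_nonneg _)
  _ = ‖ψ (g s)‖ := one_mul _

lemma mul_line_tendsto (ψ : SchwartzMap (ℝ × ℝ) ℝ) {g : ℝ → ℝ × ℝ}
    (h : ∀ s, |s| ≤ ‖g s‖) {c : ℝ → ℝ} (hbd : ∀ t, |c t| ≤ 1)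
    {l : Filter ℝ} (hl : Tendsto (fun s => |s|) l atTop) :
    Tendsto (fun s => c s * ψ (g s)) l (nhds 0) := by
  refine squeeze_zero_norm (a := fun s => ‖ψ (g s)‖) ?_ ?_
  · intro s
    rw [norm_mul]
    calc ‖c s‖ * ‖ψ (g s)‖ ≤ 1 * ‖ψ (g s)‖ :=
          mul_le_mul_of_nonneg_right (hbd s) (norm_nonneg _)
    _ = ‖ψ (g s)‖ := one_mul _
  · simpa using (line_tendsto ψ h hl).norm

/-- The shear `(u, x) ↦ (u + x, x)` as a measurable equivalence of `ℝ × ℝ`. -/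
def shearE : (ℝ × ℝ) ≃ᵐ (ℝ × ℝ) where
  toFun := fun p => (p.1 + p.2, p.2)
  invFun := fun p => (p.1 - p.2, p.2)
  left_inv := fun p => by simp
  right_inv := fun p => by simp
  measurable_toFun := (measurable_fst.add measurable_snd).prodMk measurable_snd
  measurable_invFun := (measurable_fst.sub measurable_snd).prodMk measurable_snd

/-- The distribution `ψ(t,x) = cos(t)δ(x) + H(x)sin(t−x)` solves the advection
equation `∂ₜψ + ∂ₓψ = cos(t)δ'(x)` weakly. -/
theorem advection_solution_with_delta (φ : SchwartzMap (ℝ × ℝ) ℝ) :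
    (-(∫ t : ℝ, Real.cos t * (Dt φ + Dx φ) (t, 0)))
      - (∫ t : ℝ, ∫ x in Set.Ioi (0 : ℝ), Real.sin (t - x) * (Dt φ + Dx φ) (t, x))
      = -(∫ t : ℝ, Real.cos t * (Dx φ) (t, 0)) := by
  set Φ : SchwartzMap (ℝ × ℝ) ℝ := LineDeriv.lineDerivOpCLM ℝ (SchwartzMap (ℝ × ℝ) ℝ) ((1, 1) : ℝ × ℝ) φ with hΦdef
  -- pointwise identity
  have hΦeq : ∀ p : ℝ × ℝ, (Dt φ + Dx φ) p = Φ p := by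
    intro p
    have hd : DifferentiableAt ℝ φ p := φ.differentiable.differentiableAt
    simp only [SchwartzMap.add_apply, Dt, Dx, hΦdef, LineDeriv.lineDerivOpCLM_apply, SchwartzMap.lineDerivOp_apply_eq_fderiv]
    rw [← (fderiv ℝ φ p).map_add]
    norm_num
  -- line conditions
  have hline0 : ∀ s : ℝ, |s| ≤ ‖((s, 0) : ℝ × ℝ)‖ := fun s => by
    simpa using norm_fst_le ((s, 0) : ℝ × ℝ)
  have hlineu : ∀ u : ℝ, ∀ s : ℝ, |s| ≤ ‖((u + s, s) : ℝ × ℝ)‖ := fun u s => by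
    simpa using norm_snd_le ((u + s, s) : ℝ × ℝ)
  have hcontg0 : Continuous (fun s : ℝ => ((s, 0) : ℝ × ℝ)) := by continuity
  have hsinbd : ∀ t : ℝ, |Real.sin t| ≤ 1 := fun t => abs_sin_le_one t
  have hcosbd : ∀ t : ℝ, |Real.cos t| ≤ 1 := fun t => abs_cos_le_one t
  -- derivative of t ↦ φ (t, 0)
  have hD0 : ∀ t : ℝ, HasDerivAt (fun t : ℝ => φ (t, 0)) ((Dt φ) (t, 0)) t := by
    intro t
    have h1 : HasDerivAt (fun t : ℝ => ((t, 0) : ℝ × ℝ)) ((1, 0) : ℝ × ℝ) t :=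
      (hasDerivAt_id t).prodMk (hasDerivAt_const t 0)
    have h2 := (φ.differentiable.differentiableAt.hasFDerivAt).comp_hasDerivAt t h1
    simp only [Dt, LineDeriv.lineDerivOpCLM_apply, SchwartzMap.lineDerivOp_apply_eq_fderiv]
    exact h2
  -- Lemma 1 : integration by parts
  have hIsin : Integrable (fun t => Real.sin t * φ (t, 0)) :=
    mul_line_integrable φ hcontg0 hline0 Real.continuous_sin hsinbd
  have hIcosDt : Integrable (fun t => Real.cos t * (Dt φ) (t, 0)) :=
    mul_line_integrable (Dt φ) hcontg0 hline0 Real.continuous_cos hcosbd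
  have hIcosDx : Integrable (fun t => Real.cos t * (Dx φ) (t, 0)) :=
    mul_line_integrable (Dx φ) hcontg0 hline0 Real.continuous_cos hcosbd
  have lemma1 : (∫ t : ℝ, Real.cos t * (Dt φ) (t, 0)) = ∫ t : ℝ, Real.sin t * φ (t, 0) := by
    have hder : ∀ t : ℝ, HasDerivAt (fun t => Real.cos t * φ (t, 0))
        (-(Real.sin t * φ (t, 0)) + Real.cos t * (Dt φ) (t, 0)) t := by
      intro t
      have := (Real.hasDerivAt_cos t).mul (hD0 t)
      simp only [neg_mul] at this
      exact this
    have hint : Integrable (fun t => -(Real.sin t * φ (t, 0)) + Real.cos t * (Dt φ) (t, 0)) :=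
      hIsin.neg.add hIcosDt
    have hbot : Tendsto (fun t => Real.cos t * φ (t, 0)) atBot (nhds 0) :=
      mul_line_tendsto φ hline0 hcosbd tendsto_abs_atBot_atTop
    have htop : Tendsto (fun t => Real.cos t * φ (t, 0)) atTop (nhds 0) :=
      mul_line_tendsto φ hline0 hcosbd tendsto_abs_atTop_atTop
    have h0 := integral_of_hasDerivAt_of_tendsto hder hint hbot htop
    rw [sub_zero] at h0
    have hsplit : (∫ t : ℝ, (-(Real.sin t * φ (t, 0)) + Real.cos t * (Dt φ) (t, 0)))
        = -(∫ t : ℝ, Real.sin t * φ (t, 0)) + ∫ t : ℝ, Real.cos t * (Dt φ) (t, 0) := by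
      have hIsinNeg : Integrable (fun t => -(Real.sin t * φ (t, 0))) := hIsin.neg
      rw [integral_add hIsinNeg hIcosDt, integral_neg]
    rw [hsplit] at h0
    linarith
  -- Lemma 2 : half-line FTC along characteristics
  have lemma2 : ∀ u : ℝ, (∫ x in Set.Ioi (0:ℝ), Φ (u + x, x)) = -φ (u, 0) := by
    intro u
    have hcontgu : Continuous (fun x : ℝ => ((u + x, x) : ℝ × ℝ)) := by continuity
    have hder : ∀ x ∈ Set.Ioi (0:ℝ), HasDerivAt (fun x : ℝ => φ (u + x, x)) (Φ (u + x, x)) x := by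
      intro x _
      have h1 : HasDerivAt (fun x : ℝ => ((u + x, x) : ℝ × ℝ)) ((1, 1) : ℝ × ℝ) x :=
        ((hasDerivAt_id x).const_add u).prodMk (hasDerivAt_id x)
      have h2 := (φ.differentiable.differentiableAt.hasFDerivAt).comp_hasDerivAt x h1
      simp only [hΦdef, LineDeriv.lineDerivOpCLM_apply, SchwartzMap.lineDerivOp_apply_eq_fderiv]
      exact h2
    have hint : IntegrableOn (fun x : ℝ => Φ (u + x, x)) (Set.Ioi 0) :=
      (line_integrable Φ hcontgu (hlineu u)).integrableOn
    have htop : Tendsto (fun x : ℝ => φ (u + x, x)) atTop (nhds 0) :=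
      line_tendsto φ (hlineu u) tendsto_abs_atTop_atTop
    have hcont : ContinuousWithinAt (fun x : ℝ => φ (u + x, x)) (Set.Ici 0) 0 :=
      (φ.continuous.comp hcontgu).continuousWithinAt
    have := integral_Ioi_of_hasDerivAt_of_tendsto hcont hder hint htop
    simpa using this
  -- the double integral
  have key : (∫ t : ℝ, ∫ x in Set.Ioi (0 : ℝ), Real.sin (t - x) * Φ (t, x))
      = -(∫ t : ℝ, Real.sin t * φ (t, 0)) := by
    set μν : Measure (ℝ × ℝ) := (volume : Measure ℝ).prod (volume.restrict (Set.Ioi 0)) with hμν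
    set G : ℝ × ℝ → ℝ := fun p => Real.sin (p.1 - p.2) * Φ p with hGdef
    have hGcont : Continuous G :=
      (Real.continuous_sin.comp (continuous_fst.sub continuous_snd)).mul Φ.continuous
    have hΦint : Integrable (⇑Φ) μν := by
      have h1 : Integrable (⇑Φ) (volume : Measure (ℝ × ℝ)) := Φ.integrable
      rw [Measure.volume_eq_prod] at h1
      have h2 := h1.restrict (s := Set.univ ×ˢ Set.Ioi 0)
      rwa [← Measure.prod_restrict, Measure.restrict_univ] at h2
    have hG : Integrable G μν := by
      refine hΦint.norm.mono' hGcont.aestronglyMeasurable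
        (Filter.Eventually.of_forall fun p => ?_)
      rw [hGdef]
      simp only [norm_mul, norm_norm]
      calc ‖Real.sin (p.1 - p.2)‖ * ‖Φ p‖ ≤ 1 * ‖Φ p‖ :=
            mul_le_mul_of_nonneg_right (abs_sin_le_one _) (norm_nonneg _)
      _ = ‖Φ p‖ := one_mul _
    have mp : MeasurePreserving (⇑shearE) μν μν := measurePreserving_add_prod _ _
    have hGe : ∀ p : ℝ × ℝ, G (shearE p) = Real.sin p.1 * Φ (p.1 + p.2, p.2) := by
      intro p
      simp [hGdef, shearE, MeasurableEquiv.coe_mk]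
    have hG2 : Integrable (fun p : ℝ × ℝ => Real.sin p.1 * Φ (p.1 + p.2, p.2)) μν := by
      have := (mp.integrable_comp hG.aestronglyMeasurable).mpr hG
      exact this.congr (Filter.Eventually.of_forall fun p => (hGe p))
    have h1 : (∫ t : ℝ, ∫ x in Set.Ioi (0 : ℝ), Real.sin (t - x) * Φ (t, x)) = ∫ p, G p ∂μν :=
      integral_integral hG
    have h2 : (∫ p, G p ∂μν) = ∫ p, G (shearE p) ∂μν :=
      (mp.integral_comp shearE.measurableEmbedding G).symm
    have h3 : (∫ p, G (shearE p) ∂μν)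
        = ∫ u : ℝ, ∫ x in Set.Ioi (0 : ℝ), Real.sin u * Φ (u + x, x) := by
      rw [show (fun p : ℝ × ℝ => G (shearE p)) = fun p : ℝ × ℝ => Real.sin p.1 * Φ (p.1 + p.2, p.2)
        from funext hGe]
      exact (integral_integral (f := fun u x => Real.sin u * Φ (u + x, x)) hG2).symm
    rw [h1, h2, h3]
    have h4 : ∀ u : ℝ, (∫ x in Set.Ioi (0 : ℝ), Real.sin u * Φ (u + x, x))
        = -(Real.sin u * φ (u, 0)) := by
      intro u
      rw [integral_const_mul, lemma2 u]
      ring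
    simp_rw [h4]
    exact integral_neg _
  -- assemble
  have hsum : (∫ t : ℝ, Real.cos t * (Dt φ + Dx φ) (t, 0))
      = (∫ t : ℝ, Real.cos t * (Dt φ) (t, 0)) + ∫ t : ℝ, Real.cos t * (Dx φ) (t, 0) := by
    rw [← integral_add hIcosDt hIcosDx]
    congr 1
    funext t
    simp [SchwartzMap.add_apply, mul_add]
  have hgoal2 : (∫ t : ℝ, ∫ x in Set.Ioi (0 : ℝ), Real.sin (t - x) * (Dt φ + Dx φ) (t, x))
      = -(∫ t : ℝ, Real.sin t * φ (t, 0)) := by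
    rw [← key]
    congr 1
    funext t
    congr 1
    funext x
    rw [hΦeq (t, x)]
  rw [hsum, hgoal2, lemma1]
  ring
end

section
/- The distribution Ψ(t,x) = cos(t)δ(x) + (1/2)sin(t−|x|) solves −∂ₜ²Ψ + ∂ₓ²Ψ = cos(t)δ''(x) weakly; precisely, for every Schwartz function φ : ℝ² → ℝ, ∫_ℝ cos(t)·(−∂ₜ²φ + ∂ₓ²φ)(t,0) dt + ∫_{ℝ²} (1/2)sin(t−|x|)·(−∂ₜ²φ + ∂ₓ²φ)(t,x) dx dt = ∫_ℝ cos(t)(∂ₓ²φ)(t,0) dt. -/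
open MeasureTheory SchwartzMap Real
open Filter Topology Set

lemma schwartz_bound (ψ : SchwartzMap (ℝ × ℝ) ℝ) :
    ∃ C : ℝ, 0 ≤ C ∧ ∀ p : ℝ × ℝ, (1 + ‖p‖) ^ 2 * ‖ψ p‖ ≤ C := by
  refine ⟨2 ^ 2 * (Finset.Iic ((2:ℕ),(0:ℕ))).sup
    (fun m => SchwartzMap.seminorm ℝ m.1 m.2) ψ, by positivity, fun p => ?_⟩
  have := SchwartzMap.one_add_le_sup_seminorm_apply (𝕜 := ℝ) (m := ((2:ℕ),(0:ℕ)))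
    (k := 2) (n := 0) le_rfl le_rfl ψ p
  simpa [norm_iteratedFDeriv_zero] using this

lemma bound_snd (ψ : SchwartzMap (ℝ × ℝ) ℝ) :
    ∃ C : ℝ, 0 ≤ C ∧ ∀ t x : ℝ, ‖ψ (t, x)‖ ≤ C * ((1 + |x|) ^ 2)⁻¹ := by
  obtain ⟨C, hC0, hC⟩ := schwartz_bound ψ
  refine ⟨C, hC0, fun t x => ?_⟩
  have h1 : (1 + |x|) ≤ 1 + ‖(t, x)‖ := by
    have : |x| ≤ ‖(t, x)‖ := norm_snd_le (t, x)
    linarith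
  have h2 : (1 + |x|) ^ 2 * ‖ψ (t, x)‖ ≤ C := by
    refine le_trans ?_ (hC (t, x))
    have hp : (0:ℝ) ≤ 1 + |x| := by positivity
    gcongr
  have hpos : (0:ℝ) < (1 + |x|) ^ 2 := by positivity
  rw [mul_comm, ← le_div_iff₀ hpos] at h2
  simpa [div_eq_mul_inv] using h2

lemma bound_fst (ψ : SchwartzMap (ℝ × ℝ) ℝ) :
    ∃ C : ℝ, 0 ≤ C ∧ ∀ t x : ℝ, ‖ψ (t, x)‖ ≤ C * ((1 + |t|) ^ 2)⁻¹ := by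
  obtain ⟨C, hC0, hC⟩ := schwartz_bound ψ
  refine ⟨C, hC0, fun t x => ?_⟩
  have h1 : (1 + |t|) ≤ 1 + ‖(t, x)‖ := by
    have : |t| ≤ ‖(t, x)‖ := norm_fst_le (t, x)
    linarith
  have h2 : (1 + |t|) ^ 2 * ‖ψ (t, x)‖ ≤ C := by
    refine le_trans ?_ (hC (t, x))
    gcongr
  have hpos : (0:ℝ) < (1 + |t|) ^ 2 := by positivity
  rw [mul_comm, ← le_div_iff₀ hpos] at h2
  simpa [div_eq_mul_inv] using h2

lemma cont_slice_x (ψ : SchwartzMap (ℝ × ℝ) ℝ) (t : ℝ) :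
    Continuous (fun x => ψ (t, x)) :=
  ψ.continuous.comp (continuous_const.prodMk continuous_id)

lemma cont_slice_t (ψ : SchwartzMap (ℝ × ℝ) ℝ) (x : ℝ) :
    Continuous (fun t => ψ (t, x)) :=
  ψ.continuous.comp (continuous_id.prodMk continuous_const)

lemma slice_int_x (ψ : SchwartzMap (ℝ × ℝ) ℝ) (t : ℝ) :
    Integrable (fun x => ψ (t, x)) := by
  obtain ⟨C, hC0, hC⟩ := bound_snd ψ
  refine Integrable.mono' ((integrable_inv_one_add_sq).const_mul C)
    (cont_slice_x ψ t).aestronglyMeasurable (ae_of_all _ fun x => ?_)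
  refine (hC t x).trans ?_
  have h1 : (1:ℝ) + x ^ 2 ≤ (1 + |x|) ^ 2 := by nlinarith [abs_nonneg x, sq_abs x]
  have h2 : (0:ℝ) < 1 + x ^ 2 := by positivity
  gcongr

lemma slice_int_t (ψ : SchwartzMap (ℝ × ℝ) ℝ) (x : ℝ) :
    Integrable (fun t => ψ (t, x)) := by
  obtain ⟨C, hC0, hC⟩ := bound_fst ψ
  refine Integrable.mono' ((integrable_inv_one_add_sq).const_mul C)
    (cont_slice_t ψ x).aestronglyMeasurable (ae_of_all _ fun t => ?_)
  refine (hC t x).trans ?_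
  have h1 : (1:ℝ) + t ^ 2 ≤ (1 + |t|) ^ 2 := by nlinarith [abs_nonneg t, sq_abs t]
  have h2 : (0:ℝ) < 1 + t ^ 2 := by positivity
  gcongr

lemma slice_tendsto_x {l : Filter ℝ} (hl : Tendsto (fun x : ℝ => |x|) l atTop)
    (ψ : SchwartzMap (ℝ × ℝ) ℝ) (t : ℝ) :
    Tendsto (fun x => ψ (t, x)) l (𝓝 0) := by
  obtain ⟨C, hC0, hC⟩ := bound_snd ψ
  have h1 : Tendsto (fun x : ℝ => ((1 + |x|) ^ 2)) l atTop := by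
    refine (tendsto_pow_atTop (two_ne_zero)).comp
      (tendsto_atTop_add_const_left _ 1 hl)
  have h2 : Tendsto (fun x : ℝ => C * ((1 + |x|) ^ 2)⁻¹) l (𝓝 0) := by
    simpa [mul_zero] using (h1.inv_tendsto_atTop).const_mul C
  exact squeeze_zero_norm (fun x => hC t x) h2

lemma hasDerivAt_slice_x (ψ : SchwartzMap (ℝ × ℝ) ℝ) (t x : ℝ) :
    HasDerivAt (fun y => ψ (t, y)) (Dx ψ (t, x)) x := by
  have h1 : HasDerivAt (fun y : ℝ => ((t, y) : ℝ × ℝ)) (((0:ℝ), (1:ℝ)) : ℝ × ℝ) x :=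
    (hasDerivAt_const x t).prodMk (hasDerivAt_id x)
  have h2 := ((ψ.differentiable (t, x)).hasFDerivAt).comp_hasDerivAt x h1
  exact h2

lemma hasDerivAt_slice_t (ψ : SchwartzMap (ℝ × ℝ) ℝ) (t x : ℝ) :
    HasDerivAt (fun s => ψ (s, x)) (Dt ψ (t, x)) t := by
  have h1 : HasDerivAt (fun s : ℝ => ((s, x) : ℝ × ℝ)) (((1:ℝ), (0:ℝ)) : ℝ × ℝ) t :=
    (hasDerivAt_id t).prodMk (hasDerivAt_const t x)
  have h2 := ((ψ.differentiable (t, x)).hasFDerivAt).comp_hasDerivAt t h1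
  exact h2

lemma ibp_twice {g g' f f' f'' : ℝ → ℝ}
    (hg : ∀ x, HasDerivAt g (g' x) x) (hg' : ∀ x, HasDerivAt g' (-(g x)) x)
    (hgb : ∀ x, ‖g x‖ ≤ 1) (hg'b : ∀ x, ‖g' x‖ ≤ 1)
    (hf : ∀ x, HasDerivAt f (f' x) x) (hf' : ∀ x, HasDerivAt f' (f'' x) x)
    (hfi : Integrable f) (hf'i : Integrable f') (hf''i : Integrable f'') :
    ∫ x, g x * f'' x = -∫ x, g x * f x := by
  have mg : AEStronglyMeasurable g volume :=
    (continuous_iff_continuousAt.2 fun x => (hg x).continuousAt).aestronglyMeasurable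
  have mg' : AEStronglyMeasurable g' volume :=
    (continuous_iff_continuousAt.2 fun x => (hg' x).continuousAt).aestronglyMeasurable
  have I1 : Integrable (g * f'') := hf''i.bdd_mul mg (ae_of_all _ hgb)
  have I2 : Integrable (g' * f') := hf'i.bdd_mul mg' (ae_of_all _ hg'b)
  have I3 : Integrable (g * f') := hf'i.bdd_mul mg (ae_of_all _ hgb)
  have I4 : Integrable (g' * f) := hfi.bdd_mul mg' (ae_of_all _ hg'b)
  have I5 : Integrable ((fun x => -(g x)) * f) := by
    have : ((fun x => -(g x)) * f) = -(g * f) := by ext x; simp [mul_comm]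
    rw [this]
    exact (hfi.bdd_mul mg (ae_of_all _ hgb)).neg
  have I6 : Integrable (g * f) := hfi.bdd_mul mg (ae_of_all _ hgb)
  have step1 : ∫ x, g x * f'' x = -∫ x, g' x * f' x :=
    integral_mul_deriv_eq_deriv_mul_of_integrable (fun x _ => hg x) (fun x _ => hf' x) I1 I2 I3
  have step2 : ∫ x, g' x * f' x = -∫ x, -(g x) * f x :=
    integral_mul_deriv_eq_deriv_mul_of_integrable (fun x _ => hg' x) (fun x _ => hf x) I2 I5 I4
  rw [step1, step2]
  simp [integral_neg]

lemma tendsto_mul_zero {u v : ℝ → ℝ} {l : Filter ℝ} (hu : ∀ x, ‖u x‖ ≤ 1)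
    (hv : Tendsto v l (𝓝 0)) : Tendsto (fun x => u x * v x) l (𝓝 0) := by
  refine squeeze_zero_norm (fun x => ?_) (by simpa using hv.norm)
  calc ‖u x * v x‖ = ‖u x‖ * ‖v x‖ := norm_mul _ _
    _ ≤ 1 * ‖v x‖ := by gcongr; exact hu x
    _ = ‖v x‖ := one_mul _

lemma hd_sin_sub (t : ℝ) (x : ℝ) :
    HasDerivAt (fun x => (1/2 : ℝ) * Real.sin (t - x)) (-((1/2 : ℝ) * Real.cos (t - x))) x := by
  have h1 : HasDerivAt (fun x : ℝ => t - x) (-1) x := by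
    simpa using ((hasDerivAt_id x).const_sub t)
  have := ((Real.hasDerivAt_sin (t - x)).comp x h1).const_mul (1/2 : ℝ)
  exact this.congr_deriv (by ring)

lemma hd_neg_cos_sub (t : ℝ) (x : ℝ) :
    HasDerivAt (fun x => -((1/2 : ℝ) * Real.cos (t - x))) (-((1/2 : ℝ) * Real.sin (t - x))) x := by
  have h1 : HasDerivAt (fun x : ℝ => t - x) (-1) x := by
    simpa using ((hasDerivAt_id x).const_sub t)
  have := (((Real.hasDerivAt_cos (t - x)).comp x h1).const_mul (1/2 : ℝ)).neg
  exact this.congr_deriv (by ring)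

lemma hd_sin_add (t : ℝ) (x : ℝ) :
    HasDerivAt (fun x => (1/2 : ℝ) * Real.sin (t + x)) ((1/2 : ℝ) * Real.cos (t + x)) x := by
  have h1 : HasDerivAt (fun x : ℝ => t + x) 1 x := by
    simpa using ((hasDerivAt_id x).const_add t)
  have := ((Real.hasDerivAt_sin (t + x)).comp x h1).const_mul (1/2 : ℝ)
  exact this.congr_deriv (by ring)

lemma hd_cos_add (t : ℝ) (x : ℝ) :
    HasDerivAt (fun x => (1/2 : ℝ) * Real.cos (t + x)) (-((1/2 : ℝ) * Real.sin (t + x))) x := by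
  have h1 : HasDerivAt (fun x : ℝ => t + x) 1 x := by
    simpa using ((hasDerivAt_id x).const_add t)
  have := ((Real.hasDerivAt_cos (t + x)).comp x h1).const_mul (1/2 : ℝ)
  exact this.congr_deriv (by ring)

lemma inner_x (φ : SchwartzMap (ℝ × ℝ) ℝ) (t : ℝ) :
    ∫ x, (1/2 : ℝ) * Real.sin (t - |x|) * (Dx (Dx φ)) (t, x)
      = -(Real.cos t * φ (t, 0)) - ∫ x, (1/2 : ℝ) * Real.sin (t - |x|) * φ (t, x) := by
  set h : ℝ → ℝ := fun x => φ (t, x) with hh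
  set h' : ℝ → ℝ := fun x => (Dx φ) (t, x) with hh'
  set h'' : ℝ → ℝ := fun x => (Dx (Dx φ)) (t, x) with hh''
  have hd : ∀ x, HasDerivAt h (h' x) x := hasDerivAt_slice_x φ t
  have hd' : ∀ x, HasDerivAt h' (h'' x) x := hasDerivAt_slice_x (Dx φ) t
  have hi : Integrable h := slice_int_x φ t
  have hi' : Integrable h' := slice_int_x (Dx φ) t
  have hi'' : Integrable h'' := slice_int_x (Dx (Dx φ)) t
  have htop : Tendsto h atTop (𝓝 0) := slice_tendsto_x tendsto_abs_atTop_atTop φ t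
  have hbot : Tendsto h atBot (𝓝 0) := slice_tendsto_x tendsto_abs_atBot_atTop φ t
  have htop' : Tendsto h' atTop (𝓝 0) := slice_tendsto_x tendsto_abs_atTop_atTop (Dx φ) t
  have hbot' : Tendsto h' atBot (𝓝 0) := slice_tendsto_x tendsto_abs_atBot_atTop (Dx φ) t
  -- the four trig weights
  set u : ℝ → ℝ := fun x => (1/2 : ℝ) * Real.sin (t - x) with hu
  set u' : ℝ → ℝ := fun x => -((1/2 : ℝ) * Real.cos (t - x)) with hu'
  set w : ℝ → ℝ := fun x => (1/2 : ℝ) * Real.sin (t + x) with hw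
  set w' : ℝ → ℝ := fun x => (1/2 : ℝ) * Real.cos (t + x) with hw'
  have ub : ∀ x, ‖u x‖ ≤ 1 := fun x => by
    rw [Real.norm_eq_abs, abs_mul, abs_of_pos (by norm_num : (0:ℝ) < 1/2)]
    linarith [Real.abs_sin_le_one (t - x)]
  have u'b : ∀ x, ‖u' x‖ ≤ 1 := fun x => by
    rw [Real.norm_eq_abs, abs_neg, abs_mul, abs_of_pos (by norm_num : (0:ℝ) < 1/2)]
    linarith [Real.abs_cos_le_one (t - x)]
  have wb : ∀ x, ‖w x‖ ≤ 1 := fun x => by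
    rw [Real.norm_eq_abs, abs_mul, abs_of_pos (by norm_num : (0:ℝ) < 1/2)]
    linarith [Real.abs_sin_le_one (t + x)]
  have w'b : ∀ x, ‖w' x‖ ≤ 1 := fun x => by
    rw [Real.norm_eq_abs, abs_mul, abs_of_pos (by norm_num : (0:ℝ) < 1/2)]
    linarith [Real.abs_cos_le_one (t + x)]
  have uc : Continuous u := continuous_const.mul (Real.continuous_sin.comp (continuous_const.sub continuous_id))
  have u'c : Continuous u' := (continuous_const.mul (Real.continuous_cos.comp (continuous_const.sub continuous_id))).neg
  have wc : Continuous w := continuous_const.mul (Real.continuous_sin.comp (continuous_const.add continuous_id))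
  have w'c : Continuous w' := continuous_const.mul (Real.continuous_cos.comp (continuous_const.add continuous_id))
  -- integrability of products
  have Iuh'' : Integrable (fun x => u x * h'' x) := hi''.bdd_mul uc.aestronglyMeasurable (ae_of_all _ ub)
  have Iu'h' : Integrable (fun x => u' x * h' x) := hi'.bdd_mul u'c.aestronglyMeasurable (ae_of_all _ u'b)
  have Iuh' : Integrable (fun x => u x * h' x) := hi'.bdd_mul uc.aestronglyMeasurable (ae_of_all _ ub)
  have Iu'h : Integrable (fun x => u' x * h x) := hi.bdd_mul u'c.aestronglyMeasurable (ae_of_all _ u'b)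
  have Iuh : Integrable (fun x => u x * h x) := hi.bdd_mul uc.aestronglyMeasurable (ae_of_all _ ub)
  have Iwh'' : Integrable (fun x => w x * h'' x) := hi''.bdd_mul wc.aestronglyMeasurable (ae_of_all _ wb)
  have Iw'h' : Integrable (fun x => w' x * h' x) := hi'.bdd_mul w'c.aestronglyMeasurable (ae_of_all _ w'b)
  have Iwh' : Integrable (fun x => w x * h' x) := hi'.bdd_mul wc.aestronglyMeasurable (ae_of_all _ wb)
  have Iw'h : Integrable (fun x => w' x * h x) := hi.bdd_mul w'c.aestronglyMeasurable (ae_of_all _ w'b)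
  have Iwh : Integrable (fun x => w x * h x) := hi.bdd_mul wc.aestronglyMeasurable (ae_of_all _ wb)
  -- IBP on (0, ∞), first time: ∫ u h'' = -u 0 * h' 0 - ∫ u' h'
  have ibp1 : ∫ x in Ioi (0:ℝ), u x * h'' x
      = 0 - u 0 * h' 0 - ∫ x in Ioi (0:ℝ), u' x * h' x := by
    refine integral_Ioi_mul_deriv_eq_deriv_mul
      (fun x _ => hd_sin_sub t x) (fun x _ => hd' x)
      Iuh''.integrableOn Iu'h'.integrableOn ?_ ?_
    · exact ((uc.mul (continuous_iff_continuousAt.2 fun x => (hd' x).continuousAt)).tendsto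
        0).mono_left nhdsWithin_le_nhds
    · exact tendsto_mul_zero ub htop'
  have ibp2 : ∫ x in Ioi (0:ℝ), u' x * h' x
      = 0 - u' 0 * h 0 - ∫ x in Ioi (0:ℝ), -((1/2 : ℝ) * Real.sin (t - x)) * h x := by
    refine integral_Ioi_mul_deriv_eq_deriv_mul
      (fun x _ => hd_neg_cos_sub t x) (fun x _ => hd x)
      Iu'h'.integrableOn ?_ ?_ ?_
    · have e : ((fun x => -((1/2 : ℝ) * Real.sin (t - x))) * h) = (fun x => -(u x * h x)) := by
        funext x; simp only [Pi.mul_apply, hu]; ring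
      rw [e]; exact Iuh.neg.integrableOn
    · exact ((u'c.mul (continuous_iff_continuousAt.2 fun x => (hd x).continuousAt)).tendsto
        0).mono_left nhdsWithin_le_nhds
    · exact tendsto_mul_zero u'b htop
  -- IBP on (-∞, 0], first time
  have ibp3 : ∫ x in Iic (0:ℝ), w x * h'' x
      = w 0 * h' 0 - 0 - ∫ x in Iic (0:ℝ), w' x * h' x := by
    refine integral_Iic_mul_deriv_eq_deriv_mul
      (fun x _ => hd_sin_add t x) (fun x _ => hd' x)
      Iwh''.integrableOn Iw'h'.integrableOn ?_ ?_
    · exact ((wc.mul (continuous_iff_continuousAt.2 fun x => (hd' x).continuousAt)).tendsto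
        0).mono_left nhdsWithin_le_nhds
    · exact tendsto_mul_zero wb hbot'
  have ibp4 : ∫ x in Iic (0:ℝ), w' x * h' x
      = w' 0 * h 0 - 0 - ∫ x in Iic (0:ℝ), -((1/2 : ℝ) * Real.sin (t + x)) * h x := by
    refine integral_Iic_mul_deriv_eq_deriv_mul
      (fun x _ => hd_cos_add t x) (fun x _ => hd x)
      Iw'h'.integrableOn ?_ ?_ ?_
    · have e : ((fun x => -((1/2 : ℝ) * Real.sin (t + x))) * h) = (fun x => -(w x * h x)) := by
        funext x; simp only [Pi.mul_apply, hw]; ring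
      rw [e]; exact Iwh.neg.integrableOn
    · exact ((w'c.mul (continuous_iff_continuousAt.2 fun x => (hd x).continuousAt)).tendsto
        0).mono_left nhdsWithin_le_nhds
    · exact tendsto_mul_zero w'b hbot
  -- the full integrand and its integrability
  have sc : Continuous (fun x : ℝ => (1/2 : ℝ) * Real.sin (t - |x|)) :=
    continuous_const.mul (Real.continuous_sin.comp (continuous_const.sub continuous_abs))
  have sb : ∀ x : ℝ, ‖(1/2 : ℝ) * Real.sin (t - |x|)‖ ≤ 1 := fun x => by
    rw [Real.norm_eq_abs, abs_mul, abs_of_pos (by norm_num : (0:ℝ) < 1/2)]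
    linarith [Real.abs_sin_le_one (t - |x|)]
  have Ifh'' : Integrable (fun x => (1/2 : ℝ) * Real.sin (t - |x|) * h'' x) :=
    hi''.bdd_mul sc.aestronglyMeasurable (ae_of_all _ sb)
  have Ifh : Integrable (fun x => (1/2 : ℝ) * Real.sin (t - |x|) * h x) :=
    hi.bdd_mul sc.aestronglyMeasurable (ae_of_all _ sb)
  -- rewrite |x| on each half line
  have e1 : ∫ x in Ioi (0:ℝ), (1/2 : ℝ) * Real.sin (t - |x|) * h'' x
      = ∫ x in Ioi (0:ℝ), u x * h'' x := by
    refine setIntegral_congr_fun measurableSet_Ioi fun x hx => ?_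
    rw [abs_of_pos hx]
  have e2 : ∫ x in Iic (0:ℝ), (1/2 : ℝ) * Real.sin (t - |x|) * h'' x
      = ∫ x in Iic (0:ℝ), w x * h'' x := by
    refine setIntegral_congr_fun measurableSet_Iic fun x hx => ?_
    rw [abs_of_nonpos hx, sub_neg_eq_add]
  have e3 : ∫ x in Ioi (0:ℝ), (1/2 : ℝ) * Real.sin (t - |x|) * h x
      = ∫ x in Ioi (0:ℝ), u x * h x := by
    refine setIntegral_congr_fun measurableSet_Ioi fun x hx => ?_
    rw [abs_of_pos hx]
  have e4 : ∫ x in Iic (0:ℝ), (1/2 : ℝ) * Real.sin (t - |x|) * h x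
      = ∫ x in Iic (0:ℝ), w x * h x := by
    refine setIntegral_congr_fun measurableSet_Iic fun x hx => ?_
    rw [abs_of_nonpos hx, sub_neg_eq_add]
  have split1 : (∫ x in Iic (0:ℝ), (1/2 : ℝ) * Real.sin (t - |x|) * h'' x)
      + (∫ x in Ioi (0:ℝ), (1/2 : ℝ) * Real.sin (t - |x|) * h'' x)
      = ∫ x, (1/2 : ℝ) * Real.sin (t - |x|) * h'' x :=
    intervalIntegral.integral_Iic_add_Ioi Ifh''.integrableOn Ifh''.integrableOn
  have split2 : (∫ x in Iic (0:ℝ), (1/2 : ℝ) * Real.sin (t - |x|) * h x)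
      + (∫ x in Ioi (0:ℝ), (1/2 : ℝ) * Real.sin (t - |x|) * h x)
      = ∫ x, (1/2 : ℝ) * Real.sin (t - |x|) * h x :=
    intervalIntegral.integral_Iic_add_Ioi Ifh.integrableOn Ifh.integrableOn
  -- simplify neg integrals
  have n1 : ∫ x in Ioi (0:ℝ), -((1/2 : ℝ) * Real.sin (t - x)) * h x
      = -∫ x in Ioi (0:ℝ), u x * h x := by
    rw [← integral_neg]
    exact setIntegral_congr_fun measurableSet_Ioi fun x _ => by simp [hu]
  have n2 : ∫ x in Iic (0:ℝ), -((1/2 : ℝ) * Real.sin (t + x)) * h x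
      = -∫ x in Iic (0:ℝ), w x * h x := by
    rw [← integral_neg]
    exact setIntegral_congr_fun measurableSet_Iic fun x _ => by simp [hw]
  -- boundary values
  have v1 : u 0 = (1/2 : ℝ) * Real.sin t := by simp [hu]
  have v2 : u' 0 = -((1/2 : ℝ) * Real.cos t) := by simp [hu']
  have v3 : w 0 = (1/2 : ℝ) * Real.sin t := by simp [hw]
  have v4 : w' 0 = (1/2 : ℝ) * Real.cos t := by simp [hw']
  -- put everything together
  rw [← split1, ← split2, e1, e2, e3, e4, ibp3, ibp1, ibp2, ibp4, n1, n2, v1, v2, v3, v4]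
  have hφ0 : φ (t, 0) = h 0 := rfl
  rw [hφ0]
  ring

lemma ibp_t (φ : SchwartzMap (ℝ × ℝ) ℝ) (c x : ℝ) :
    ∫ t, (1/2 : ℝ) * Real.sin (t - c) * (Dt (Dt φ)) (t, x)
      = -∫ t, (1/2 : ℝ) * Real.sin (t - c) * φ (t, x) := by
  have hg : ∀ s : ℝ, HasDerivAt (fun s => (1/2 : ℝ) * Real.sin (s - c))
      ((1/2 : ℝ) * Real.cos (s - c)) s := fun s => by
    have h1 : HasDerivAt (fun s : ℝ => s - c) 1 s := (hasDerivAt_id s).sub_const c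
    have := ((Real.hasDerivAt_sin (s - c)).comp s h1).const_mul (1/2 : ℝ)
    exact this.congr_deriv (by ring)
  have hg' : ∀ s : ℝ, HasDerivAt (fun s => (1/2 : ℝ) * Real.cos (s - c))
      (-((1/2 : ℝ) * Real.sin (s - c))) s := fun s => by
    have h1 : HasDerivAt (fun s : ℝ => s - c) 1 s := (hasDerivAt_id s).sub_const c
    have := ((Real.hasDerivAt_cos (s - c)).comp s h1).const_mul (1/2 : ℝ)
    exact this.congr_deriv (by ring)
  refine ibp_twice hg hg' (fun s => ?_) (fun s => ?_)
    (fun s => hasDerivAt_slice_t φ s x) (fun s => hasDerivAt_slice_t (Dt φ) s x)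
    (slice_int_t φ x) (slice_int_t (Dt φ) x) (slice_int_t (Dt (Dt φ)) x)
  · rw [Real.norm_eq_abs, abs_mul, abs_of_pos (by norm_num : (0:ℝ) < 1/2)]
    linarith [Real.abs_sin_le_one (s - c)]
  · rw [Real.norm_eq_abs, abs_mul, abs_of_pos (by norm_num : (0:ℝ) < 1/2)]
    linarith [Real.abs_cos_le_one (s - c)]

lemma ibp_cos (φ : SchwartzMap (ℝ × ℝ) ℝ) :
    ∫ t, Real.cos t * (Dt (Dt φ)) (t, 0) = -∫ t, Real.cos t * φ (t, 0) := by
  have hg : ∀ s : ℝ, HasDerivAt (fun s => Real.cos s) (-Real.sin s) s :=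
    fun s => Real.hasDerivAt_cos s
  have hg' : ∀ s : ℝ, HasDerivAt (fun s => -Real.sin s) (-Real.cos s) s :=
    fun s => (Real.hasDerivAt_sin s).neg
  refine ibp_twice hg hg' (fun s => ?_) (fun s => ?_)
    (fun s => hasDerivAt_slice_t φ s 0) (fun s => hasDerivAt_slice_t (Dt φ) s 0)
    (slice_int_t φ 0) (slice_int_t (Dt φ) 0) (slice_int_t (Dt (Dt φ)) 0)
  · rw [Real.norm_eq_abs]; exact Real.abs_cos_le_one s
  · rw [Real.norm_eq_abs, abs_neg]; exact Real.abs_sin_le_one s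

-- boundedness and continuity of the weight on the plane
lemma Fb : ∀ p : ℝ × ℝ, ‖(1/2 : ℝ) * Real.sin (p.1 - |p.2|)‖ ≤ 1 := fun p => by
  rw [Real.norm_eq_abs, abs_mul, abs_of_pos (by norm_num : (0:ℝ) < 1/2)]
  linarith [Real.abs_sin_le_one (p.1 - |p.2|)]

lemma Fc : Continuous (fun p : ℝ × ℝ => (1/2 : ℝ) * Real.sin (p.1 - |p.2|)) :=
  continuous_const.mul (Real.continuous_sin.comp (continuous_fst.sub continuous_snd.abs))

lemma prod_int (ψ : SchwartzMap (ℝ × ℝ) ℝ) :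
    Integrable (fun p : ℝ × ℝ => (1/2 : ℝ) * Real.sin (p.1 - |p.2|) * ψ p)
      ((volume : Measure ℝ).prod (volume : Measure ℝ)) := by
  rw [← Measure.volume_eq_prod ℝ ℝ]
  exact ψ.integrable.bdd_mul Fc.aestronglyMeasurable (ae_of_all _ Fb)

lemma cos_slice_int (ψ : SchwartzMap (ℝ × ℝ) ℝ) :
    Integrable (fun t => Real.cos t * ψ (t, 0)) :=
  (slice_int_t ψ 0).bdd_mul Real.continuous_cos.aestronglyMeasurable
    (ae_of_all _ fun t => by rw [Real.norm_eq_abs]; exact Real.abs_cos_le_one t)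

/-- `Ψ(t,x) = cos(t)δ(x) + (1/2)sin(t−|x|)` solves `−∂ₜ²Ψ + ∂ₓ²Ψ = cos(t)δ''(x)`
weakly. -/
theorem wave_solution_s2 (φ : SchwartzMap (ℝ × ℝ) ℝ) :
    (∫ t : ℝ, Real.cos t * (waveOp φ) (t, 0))
      + (∫ p : ℝ × ℝ, ((1 : ℝ) / 2) * Real.sin (p.1 - |p.2|) * (waveOp φ) p)
      = ∫ t : ℝ, Real.cos t * (Dx (Dx φ)) (t, 0) := by
  -- expand waveOp
  have wapp : ∀ p : ℝ × ℝ, (waveOp φ) p = -((Dt (Dt φ)) p) + (Dx (Dx φ)) p := by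
    intro p
    rw [waveOp, SchwartzMap.add_apply]
    rfl
  -- Part A : the boundary integral
  have hA : (∫ t : ℝ, Real.cos t * (waveOp φ) (t, 0))
      = (∫ t, Real.cos t * φ (t, 0)) + ∫ t : ℝ, Real.cos t * (Dx (Dx φ)) (t, 0) := by
    have e : (fun t : ℝ => Real.cos t * (waveOp φ) (t, 0))
        = fun t => -(Real.cos t * (Dt (Dt φ)) (t, 0)) + Real.cos t * (Dx (Dx φ)) (t, 0) := by
      funext t; rw [wapp]; ring
    have i0 : Integrable (fun t : ℝ => -(Real.cos t * (Dt (Dt φ)) (t, 0))) :=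
      (cos_slice_int (Dt (Dt φ))).neg
    rw [e, integral_add i0 (cos_slice_int (Dx (Dx φ))), integral_neg, ibp_cos]
    ring
  -- Part B1
  have hB1 : (∫ p : ℝ × ℝ, ((1 : ℝ) / 2) * Real.sin (p.1 - |p.2|) * (Dt (Dt φ)) p)
      = -∫ p : ℝ × ℝ, ((1 : ℝ) / 2) * Real.sin (p.1 - |p.2|) * φ p := by
    rw [Measure.volume_eq_prod ℝ ℝ, integral_prod_symm _ (prod_int (Dt (Dt φ))),
      integral_prod_symm _ (prod_int φ)]
    rw [← integral_neg]
    refine integral_congr_ae (ae_of_all _ fun x => ?_)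
    simpa using ibp_t φ |x| x
  -- Part B2
  have hB2 : (∫ p : ℝ × ℝ, ((1 : ℝ) / 2) * Real.sin (p.1 - |p.2|) * (Dx (Dx φ)) p)
      = -(∫ t, Real.cos t * φ (t, 0))
        - ∫ p : ℝ × ℝ, ((1 : ℝ) / 2) * Real.sin (p.1 - |p.2|) * φ p := by
    rw [Measure.volume_eq_prod ℝ ℝ, integral_prod _ (prod_int (Dx (Dx φ))),
      integral_prod _ (prod_int φ)]
    have e : (fun t : ℝ => ∫ x, (1/2 : ℝ) * Real.sin (t - |x|) * (Dx (Dx φ)) (t, x))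
        = fun t => -(Real.cos t * φ (t, 0))
            - ∫ x, (1/2 : ℝ) * Real.sin (t - |x|) * φ (t, x) := by
      funext t; exact inner_x φ t
    rw [e]
    have i1 : Integrable (fun t : ℝ => -(Real.cos t * φ (t, 0))) := (cos_slice_int φ).neg
    have i2 : Integrable (fun t : ℝ => ∫ x, (1/2 : ℝ) * Real.sin (t - |x|) * φ (t, x)) :=
      (prod_int φ).integral_prod_left
    rw [integral_sub i1 i2, integral_neg]
  -- Part B
  have hB : (∫ p : ℝ × ℝ, ((1 : ℝ) / 2) * Real.sin (p.1 - |p.2|) * (waveOp φ) p)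
      = -(∫ t, Real.cos t * φ (t, 0)) := by
    have e : (fun p : ℝ × ℝ => ((1 : ℝ) / 2) * Real.sin (p.1 - |p.2|) * (waveOp φ) p)
        = fun p => -(((1 : ℝ) / 2) * Real.sin (p.1 - |p.2|) * (Dt (Dt φ)) p)
            + ((1 : ℝ) / 2) * Real.sin (p.1 - |p.2|) * (Dx (Dx φ)) p := by
      funext p; rw [wapp]; ring
    have j1 : Integrable (fun p : ℝ × ℝ =>
        ((1 : ℝ) / 2) * Real.sin (p.1 - |p.2|) * (Dt (Dt φ)) p) := by
      rw [Measure.volume_eq_prod ℝ ℝ]; exact prod_int (Dt (Dt φ))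
    have j2 : Integrable (fun p : ℝ × ℝ =>
        ((1 : ℝ) / 2) * Real.sin (p.1 - |p.2|) * (Dx (Dx φ)) p) := by
      rw [Measure.volume_eq_prod ℝ ℝ]; exact prod_int (Dx (Dx φ))
    have j1n : Integrable (fun p : ℝ × ℝ =>
        -(((1 : ℝ) / 2) * Real.sin (p.1 - |p.2|) * (Dt (Dt φ)) p)) := j1.neg
    rw [e, integral_add j1n j2, integral_neg, hB1, hB2]
    ring
  rw [hA, hB]
  ring
end

section
/- (Conservation of the distributional constraint.) Let F : ℝ → ℝ be continuously differentiable. Let u, p, q : ℝ → (𝓢(ℝ,ℝ) → ℝ) be families of tempered distributions on ℝ such that for every Schwartz function g : ℝ → ℝ the maps t ↦ u(t)(g), t ↦ p(t)(g), t ↦ q(t)(g) are differentiable and satisfy (d/dt)u(t)(g) = −p(t)(g), (d/dt)p(t)(g) = q(t)(g'), and (d/dt)q(t)(g) = p(t)(g') − F'(t)·g(0) for all t. Define C(t)(g) = q(t)(g) + u(t)(g') + F(t)·g(0). Then C(t)(g) = C(0)(g) for all t ∈ ℝ and all Schwartz g. In particular, if the constraint vanishes initially (C(0)(g) = 0 for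 all g), it vanishes for all time. -/
open MeasureTheory SchwartzMap Real

/-- Conservation of the distributional constraint
`C = φ − ∂ₓψ̄ + F(t)δ(x)` along solutions of the first-order system
`∂ₜψ̄ = −π`, `∂ₜπ = −∂ₓφ`, `∂ₜφ = −∂ₓπ − F'(t)δ(x)` (weak formulation,
with `u, p, q` standing for `ψ̄, π, φ`). -/
theorem constraint_conservation (F : ℝ → ℝ) (hF : ContDiff ℝ 1 F)
    (u p q : ℝ → (SchwartzMap ℝ ℝ →L[ℝ] ℝ))
    (hu : ∀ (g : SchwartzMap ℝ ℝ) (t : ℝ),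
      HasDerivAt (fun s => u s g) (-(p t g)) t)
    (hp : ∀ (g : SchwartzMap ℝ ℝ) (t : ℝ),
      HasDerivAt (fun s => p s g) (q t (SchwartzMap.derivCLM ℝ ℝ g)) t)
    (hq : ∀ (g : SchwartzMap ℝ ℝ) (t : ℝ),
      HasDerivAt (fun s => q s g)
        (p t (SchwartzMap.derivCLM ℝ ℝ g) - deriv F t * g 0) t)
    (C : ℝ → (SchwartzMap ℝ ℝ → ℝ))
    (hC : C = fun t g => q t g + u t (SchwartzMap.derivCLM ℝ ℝ g) + F t * g 0) :
    ∀ (t : ℝ) (g : SchwartzMap ℝ ℝ), C t g = C 0 g := by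
  intro t g
  subst hC
  have hFd : ∀ s : ℝ, HasDerivAt F (deriv F s) s := fun s =>
    ((hF.differentiable one_ne_zero) s).hasDerivAt
  have key : ∀ s : ℝ, HasDerivAt
      (fun s => q s g + u s (SchwartzMap.derivCLM ℝ ℝ g) + F s * g 0) 0 s := by
    intro s
    have h := ((hq g s).add (hu (SchwartzMap.derivCLM ℝ ℝ g) s)).add
      ((hFd s).mul_const (g 0))
    exact h.congr_deriv (by ring)
  have := is_const_of_deriv_eq_zero (f := fun s => q s g + u s (SchwartzMap.derivCLM ℝ ℝ g) + F s * g 0)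
    (fun s => (key s).differentiableAt) (fun s => (key s).deriv) t 0
  simpa using this
end
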